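/- arXiv:2212.02972 — 2 statements merged into one kernel-verified Lean document; each statement's English description precedes it below -/
import Mathlib

section
/- Let n ≥ 1 be an integer, with h, δ and ν_n as defined. Then one has the internal direct sum decompositions of 𝔽[t]-modules K_∞⟨t⟩ = 𝔽[θ,t]·ν_n ⊕ 𝔪_∞⟨t⟩·ν_n and 𝔪_∞⟨t⟩ = {P·ν_n : P ∈ 𝔽[θ,t], deg_θ P < h} ⊕ 𝔪_∞⟨t⟩·ν_n. -/
open scoped Classical ENNReal
open Filter

noncomputable section

namespace Carlitz

variable (F : Type) [Field F] [Fintype F]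

/-- `K∞ = 𝔽((1/θ))`, realized as the field of formal Laurent series over `F`;
the Laurent-series variable plays the role of `1/θ`. -/
abbrev Kinf := LaurentSeries F

/-- `θ ∈ K∞`, the inverse of the Laurent-series variable. -/
def theta : Kinf F := HahnSeries.single (-1 : ℤ) (1 : F)

/-- The absolute value `|x| = q ^ (deg_θ x)`, with values in `ℝ≥0∞`. -/
def Kabs {R : Type} [Zero R] (q : ℕ) (x : HahnSeries ℤ R) : ℝ≥0∞ :=
  if x = 0 then 0 else (q : ℝ≥0∞) ^ (-x.order)

/-- The ambient ring of the Tate algebra: formal power series in `t` over `K∞`. -/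
abbrev TS := PowerSeries (Kinf F)

/-- The `i`-th `t`-coefficient. -/
def coeffT (i : ℕ) (f : TS F) : Kinf F := PowerSeries.coeff (R := Kinf F) i f

/-- Membership in the Tate algebra `K∞⟨t⟩`: the coefficients tend to `0`. -/
def IsTate (f : TS F) : Prop :=
  Tendsto (fun i => Kabs (Fintype.card F) (coeffT F i f)) atTop (nhds 0)

/-- The Gauss norm `‖f‖ = sup_i |a_i|`. -/
def gnorm (f : TS F) : ℝ≥0∞ := ⨆ i, Kabs (Fintype.card F) (coeffT F i f)

/-- The twist `f ↦ f⁽¹⁾`: the coefficientwise `q`-power Frobenius. -/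
def twist (f : TS F) : TS F := PowerSeries.mk fun i => coeffT F i f ^ Fintype.card F

/-- The iterated twist `f ↦ f⁽ᵏ⁾`. -/
def twistIter (k : ℕ) (f : TS F) : TS F := (twist F)^[k] f

/-- The variable `t` of the Tate algebra. -/
def tt : TS F := PowerSeries.X

/-- `θ`, viewed as a constant of `K∞⟨t⟩`. -/
def th : TS F := PowerSeries.C (R := Kinf F) (theta F)

/-- The embedding `𝔽[θ] → K∞` sending the polynomial variable to `θ`. -/
def polyK : Polynomial F →+* Kinf F :=
  Polynomial.eval₂RingHom (HahnSeries.C : F →+* Kinf F) (theta F)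

/-- The embedding `𝔽[θ][t] → K∞⟨t⟩`: the outer variable goes to `t`,
the inner variable goes to `θ`. -/
def polyT : Polynomial (Polynomial F) →+* TS F :=
  Polynomial.eval₂RingHom ((PowerSeries.C (R := Kinf F)).comp (polyK F)) PowerSeries.X

/-- The subring `𝔽[θ,t] ⊆ K∞⟨t⟩`. -/
def PolyTT : Set (TS F) := Set.range (polyT F)

/-- The subset of `𝔽[θ,t]` of elements of `θ`-degree `< n`. -/
def PolyDegLt (n : ℕ) : Set (TS F) :=
  {f | ∃ P : Polynomial (Polynomial F), (∀ i, (P.coeff i).degree < (n : ℕ)) ∧ f = polyT F P}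

/-- The action of `𝔽[t]` on `K∞⟨t⟩`: `a • f` is `actT a * f`. -/
def actT : Polynomial F →+* TS F :=
  Polynomial.eval₂RingHom ((PowerSeries.C (R := Kinf F)).comp (HahnSeries.C : F →+* Kinf F))
    PowerSeries.X

/-- Convergence in `K∞⟨t⟩` with respect to the Gauss norm:
`L` is the limit of the sequence `s`. -/
def TT (s : ℕ → TS F) (L : TS F) : Prop :=
  Tendsto (fun N => gnorm F (L - s N)) atTop (nhds 0)

/-- Convergence in `K∞`: `L` is the limit of the sequence `s`. -/
def KT (q : ℕ) (s : ℕ → Kinf F) (L : Kinf F) : Prop :=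
  Tendsto (fun N => Kabs q (L - s N)) atTop (nhds 0)

/-- Partial products defining `ν_n = (−θ)^{−h} ∏_{j≥0} (1 − t·θ^{−qʲ})ⁿ`,
where `n = h(q−1) + δ`. -/
def nuPartial (n h N : ℕ) : TS F :=
  PowerSeries.C (R := Kinf F) ((-theta F)⁻¹ ^ h) *
    ∏ j ∈ Finset.range N,
      (1 - tt F * PowerSeries.C (R := Kinf F) ((theta F)⁻¹ ^ Fintype.card F ^ j)) ^ n

/-- Partial products defining `ω_n = (−θ)^m ∏_{i≥0} (1 − t·θ^{−qⁱ})^{−n}`,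
where `n = m(q−1)`; `ω_n` is the `n`-th power of the Anderson–Thakur function. -/
def omegaPartial (n m N : ℕ) : TS F :=
  PowerSeries.C (R := Kinf F) ((-theta F) ^ m) *
    ∏ i ∈ Finset.range N,
      ((1 - tt F * PowerSeries.C (R := Kinf F) ((theta F)⁻¹ ^ Fintype.card F ^ i)) ^ n)⁻¹

/-- Partial sums defining `ξ_e = ∑_{k≥0} e⁽ᵏ⁾ ∏_{i=0}^{k} (t−θ^{qⁱ})^{−n}`. -/
def xiPartial (n : ℕ) (e : TS F) (N : ℕ) : TS F :=
  ∑ k ∈ Finset.range N, twistIter F k e *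
    (∏ i ∈ Finset.range (k + 1),
      (tt F - PowerSeries.C (R := Kinf F) (theta F ^ Fintype.card F ^ i)) ^ n)⁻¹

/-- Partial sums defining `s_h = h + ∑_{i≥1} h⁽ⁱ⁾ ∏_{j=0}^{i−1} (t−θ^{qʲ})^{−n}`. -/
def sPartial (n : ℕ) (h : TS F) (N : ℕ) : TS F :=
  ∑ i ∈ Finset.range N, twistIter F i h *
    (∏ j ∈ Finset.range i,
      (tt F - PowerSeries.C (R := Kinf F) (theta F ^ Fintype.card F ^ j)) ^ n)⁻¹

/-- The map `β : f ↦ f − (t−θ)ⁿ f⁽¹⁾`. -/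
def beta (n : ℕ) (f : TS F) : TS F := f - (tt F - th F) ^ n * twist F f

/-- The set of integral extension representatives
`X_n = {ξ ∈ K∞⟨t⟩ : (t−θ)ⁿ ξ − ξ⁽¹⁾ ∈ 𝔽[θ,t]}`. -/
def Xset (n : ℕ) : Set (TS F) :=
  {ξ | IsTate F ξ ∧ (tt F - th F) ^ n * ξ - twist F ξ ∈ PolyTT F}

section S4aux

variable {F : Type} [Field F] [Fintype F]

/-- Coefficient-vanishing bound on `K∞`, encoding `|x| ≤ q^e`. -/
def Kle (e : ℤ) (x : Kinf F) : Prop := ∀ k : ℤ, k < -e → x.coeff k = 0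

theorem Kle.mono {e e' : ℤ} (h : e ≤ e') {x : Kinf F} (hx : Kle e x) : Kle e' x :=
  fun k hk => hx k (by omega)

theorem Kle_zero (e : ℤ) : Kle e (0 : Kinf F) := fun _ _ => HahnSeries.coeff_zero

theorem Kle_one : Kle 0 (1 : Kinf F) := by
  intro k hk
  rw [HahnSeries.coeff_one, if_neg (by omega)]

theorem Kle_add {e : ℤ} {x y : Kinf F} (hx : Kle e x) (hy : Kle e y) : Kle e (x + y) := by
  intro k hk
  rw [HahnSeries.coeff_add, hx k hk, hy k hk, add_zero]

theorem Kle_neg {e : ℤ} {x : Kinf F} (hx : Kle e x) : Kle e (-x) := by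
  intro k hk
  rw [HahnSeries.coeff_neg, hx k hk, neg_zero]

theorem Kle_sub {e : ℤ} {x y : Kinf F} (hx : Kle e x) (hy : Kle e y) : Kle e (x - y) := by
  rw [sub_eq_add_neg]; exact Kle_add hx (Kle_neg hy)

theorem Kle_sum {e : ℤ} {α : Type*} {s : Finset α} {f : α → Kinf F}
    (h : ∀ a ∈ s, Kle e (f a)) : Kle e (∑ a ∈ s, f a) := by
  classical
  induction s using Finset.induction_on with
  | empty => simpa using Kle_zero e
  | insert _ _ hnotmem ih =>
    rw [Finset.sum_insert hnotmem]
    exact Kle_add (h _ (Finset.mem_insert_self _ _))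
      (ih fun a ha => h a (Finset.mem_insert_of_mem ha))

theorem Kle_mul {a b : ℤ} {x y : Kinf F} (hx : Kle a x) (hy : Kle b y) :
    Kle (a + b) (x * y) := by
  intro k hk
  rw [HahnSeries.coeff_mul]
  apply Finset.sum_eq_zero
  rintro ⟨i, j⟩ hij
  rw [Finset.mem_addAntidiagonal] at hij
  obtain ⟨hi, hj, hsum⟩ := hij
  exfalso
  rcases lt_or_ge i (-a) with hlt | hgei
  · exact hi (hx i hlt)
  · rcases lt_or_ge j (-b) with hlt | hgej
    · exact hj (hy j hlt)
    · omega

theorem Kle_single (a : ℤ) (r : F) : Kle (-a) (HahnSeries.single a r : Kinf F) := by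
  intro k hk
  exact HahnSeries.coeff_single_of_ne (by omega)

theorem Kle_pow {e : ℤ} {x : Kinf F} (hx : Kle e x) (m : ℕ) : Kle ((m : ℤ) * e) (x ^ m) := by
  induction m with
  | zero => simpa using Kle_one
  | succ m ih =>
    rw [pow_succ]
    have := Kle_mul ih hx
    exact this.mono (by push_cast; ring_nf; exact le_refl _)

theorem Kle_exists (x : Kinf F) : ∃ e : ℤ, 0 ≤ e ∧ Kle e x := by
  by_cases hx : x = 0
  · exact ⟨0, le_refl _, hx ▸ Kle_zero 0⟩
  · refine ⟨max 0 (-x.order), le_max_left _ _, fun k hk => ?_⟩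
    apply HahnSeries.coeff_eq_zero_of_lt_order
    have : -(max 0 (-x.order)) ≤ x.order := by
      have := neg_le_neg (le_max_right 0 (-x.order)); omega
    omega

theorem K_eq_zero_of_forall_Kle {x : Kinf F} (h : ∀ e : ℤ, Kle e x) : x = 0 := by
  ext k
  exact h (-k - 1) k (by omega)

theorem theta_ne_zero : theta F ≠ 0 := HahnSeries.single_ne_zero one_ne_zero

theorem theta_inv : (theta F)⁻¹ = HahnSeries.single (1 : ℤ) (1 : F) := by
  rw [theta]
  refine (inv_eq_of_mul_eq_one_right ?_)
  rw [HahnSeries.single_mul_single]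
  norm_num [HahnSeries.single_zero_one]

theorem Kle_theta : Kle 1 (theta F) := by
  have := Kle_single (-1 : ℤ) (1 : F)
  rw [theta]; simpa using this

theorem Kle_theta_inv : Kle (-1) (theta F)⁻¹ := by
  rw [theta_inv]
  simpa using Kle_single (1 : ℤ) (1 : F)

theorem Kle_theta_inv_pow (m : ℕ) (hm : 1 ≤ m) : Kle (-1) ((theta F)⁻¹ ^ m) := by
  have := Kle_pow (Kle_theta_inv (F := F)) m
  exact this.mono (by push_cast; omega)

theorem Kle_negtheta_inv_pow (m : ℕ) : Kle (-(m : ℤ)) ((-theta F)⁻¹ ^ m) := by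
  have : Kle (-1) (-theta F)⁻¹ := by
    rw [inv_neg (a := theta F)]
    exact Kle_neg Kle_theta_inv
  have := Kle_pow this m
  exact this.mono (by push_cast; omega)

theorem Kle_negtheta_pow (m : ℕ) : Kle (m : ℤ) ((-theta F) ^ m) := by
  have : Kle 1 (-theta F) := Kle_neg Kle_theta
  have := Kle_pow this m
  exact this.mono (by push_cast; omega)

theorem c_ne_zero (m : ℕ) : ((-theta F)⁻¹ ^ m) ≠ 0 :=
  pow_ne_zero _ (inv_ne_zero (neg_ne_zero.2 theta_ne_zero))

theorem c_inv (m : ℕ) : ((-theta F)⁻¹ ^ m)⁻¹ = (-theta F) ^ m := by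
  rw [inv_pow, inv_inv]

/-- Coefficientwise bound on the Tate algebra, encoding `‖f‖ ≤ q^e`. -/
def Gle (e : ℤ) (f : TS F) : Prop := ∀ i : ℕ, Kle e (coeffT F i f)

theorem Gle.mono {e e' : ℤ} (h : e ≤ e') {f : TS F} (hf : Gle e f) : Gle e' f :=
  fun i => (hf i).mono h

theorem coeffT_add (i : ℕ) (f g : TS F) : coeffT F i (f + g) = coeffT F i f + coeffT F i g := by
  simp [coeffT]

theorem coeffT_sub (i : ℕ) (f g : TS F) : coeffT F i (f - g) = coeffT F i f - coeffT F i g := by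
  simp [coeffT]

theorem coeffT_neg (i : ℕ) (f : TS F) : coeffT F i (-f) = -(coeffT F i f) := by
  simp [coeffT]

theorem Gle_zero (e : ℤ) : Gle e (0 : TS F) := by
  intro i; simpa [coeffT] using Kle_zero (F := F) e

theorem Gle_one : Gle 0 (1 : TS F) := by
  intro i
  simp only [coeffT, PowerSeries.coeff_one]
  split
  · exact Kle_one
  · exact Kle_zero 0

theorem Gle_add {e : ℤ} {f g : TS F} (hf : Gle e f) (hg : Gle e g) : Gle e (f + g) := by
  intro i; rw [coeffT_add]; exact Kle_add (hf i) (hg i)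

theorem Gle_neg {e : ℤ} {f : TS F} (hf : Gle e f) : Gle e (-f) := by
  intro i; rw [coeffT_neg]; exact Kle_neg (hf i)

theorem Gle_sub {e : ℤ} {f g : TS F} (hf : Gle e f) (hg : Gle e g) : Gle e (f - g) := by
  intro i; rw [coeffT_sub]; exact Kle_sub (hf i) (hg i)

theorem Gle_mul {a b : ℤ} {f g : TS F} (hf : Gle a f) (hg : Gle b g) : Gle (a + b) (f * g) := by
  intro i
  have : coeffT F i (f * g) =
      ∑ p ∈ Finset.HasAntidiagonal.antidiagonal i, coeffT F p.1 f * coeffT F p.2 g := by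
    simpa [coeffT] using PowerSeries.coeff_mul i f g
  rw [this]
  exact Kle_sum fun p _ => Kle_mul (hf p.1) (hg p.2)

theorem Gle_C {e : ℤ} {x : Kinf F} (hx : Kle e x) : Gle e (PowerSeries.C (R := Kinf F) x) := by
  intro i
  simp only [coeffT, PowerSeries.coeff_C]
  split
  · exact hx
  · exact Kle_zero e

theorem Gle_tt : Gle 0 (tt F) := by
  intro i
  simp only [coeffT, tt, PowerSeries.coeff_X]
  split
  · exact Kle_one
  · exact Kle_zero 0

theorem Gle_sub_one_mul {A B : TS F} (hA : Gle (-1) (A - 1)) (hB : Gle (-1) (B - 1)) :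
    Gle (-1) (A * B - 1) := by
  have hB0 : Gle 0 B := by
    have h := Gle_add (hB.mono (by omega : (-1:ℤ) ≤ 0)) (Gle_one (F := F))
    rwa [sub_add_cancel] at h
  have h1 : Gle (-1) ((A - 1) * B) := by
    have := Gle_mul hA hB0
    simpa using this
  have h2 : A * B - 1 = (A - 1) * B + (B - 1) := by ring
  rw [h2]
  exact Gle_add h1 hB

theorem Gle_sub_one_prod {α : Type*} (s : Finset α) (f : α → TS F)
    (h : ∀ a ∈ s, Gle (-1) (f a - 1)) : Gle (-1) ((∏ a ∈ s, f a) - 1) := by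
  classical
  induction s using Finset.induction_on with
  | empty => simpa using Gle_zero (F := F) (-1)
  | insert _ _ hnotmem ih =>
    rw [Finset.prod_insert hnotmem]
    exact Gle_sub_one_mul (h _ (Finset.mem_insert_self _ _))
      (ih fun a ha => h a (Finset.mem_insert_of_mem ha))

theorem Gle_sub_one_pow {A : TS F} (hA : Gle (-1) (A - 1)) (n : ℕ) :
    Gle (-1) (A ^ n - 1) := by
  have : A ^ n = ∏ _j ∈ Finset.range n, A := by simp
  rw [this]
  exact Gle_sub_one_prod _ _ fun a _ => hA

theorem qE_one_lt : 1 < ((Fintype.card F : ℕ) : ℝ≥0∞) := by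
  have : 1 < Fintype.card F := Fintype.one_lt_card
  exact_mod_cast this

theorem qE_ne_zero : ((Fintype.card F : ℕ) : ℝ≥0∞) ≠ 0 := by
  have := qE_one_lt (F := F); intro h; rw [h] at this; exact (not_lt_of_ge zero_le_one) this

theorem qE_ne_top : ((Fintype.card F : ℕ) : ℝ≥0∞) ≠ ⊤ := ENNReal.natCast_ne_top _

theorem ennreal_zpow_lt {Q : ℝ≥0∞} (h1 : 1 < Q) (ht : Q ≠ ⊤) {a b : ℤ} (h : a < b) :
    Q ^ a < Q ^ b := by
  have h0 : Q ≠ 0 := fun hc => by simp [hc] at h1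
  have key : Q ^ b = Q ^ a * Q ^ (b - a) := by
    rw [← ENNReal.zpow_add h0 ht]; ring_nf
  rw [key]
  have h2 : 1 < Q ^ (b - a) := by
    calc 1 = Q ^ (0 : ℤ) := by simp
    _ ≤ Q ^ (b - a - 1) * 1 := by
        rw [mul_one]; exact ENNReal.zpow_le_of_le h1.le (by omega)
    _ < Q ^ (b - a - 1) * Q := by
        refine ENNReal.mul_lt_mul_right ?_ ?_ h1
        · exact (ENNReal.zpow_pos h0 ht _).ne'
        · exact (ENNReal.zpow_lt_top h0 ht _).ne
    _ = Q ^ (b - a) := by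
        rw [show Q ^ (b - a - 1) * Q = Q ^ (b - a - 1) * Q ^ (1 : ℤ) by rw [zpow_one],
          ← ENNReal.zpow_add h0 ht]
        norm_num
  calc Q ^ a = Q ^ a * 1 := by rw [mul_one]
  _ < Q ^ a * Q ^ (b - a) := by
      refine ENNReal.mul_lt_mul_right ?_ ?_ h2
      · exact (ENNReal.zpow_pos h0 ht _).ne'
      · exact (ENNReal.zpow_lt_top h0 ht _).ne

theorem qE_zpow_lt {a b : ℤ} (h : a < b) :
    ((Fintype.card F : ℕ) : ℝ≥0∞) ^ a < ((Fintype.card F : ℕ) : ℝ≥0∞) ^ b :=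
  ennreal_zpow_lt (qE_one_lt (F := F)) qE_ne_top h

theorem Kabs_le_of_Kle {e : ℤ} {x : Kinf F} (hx : Kle e x) :
    Kabs (Fintype.card F) x ≤ ((Fintype.card F : ℕ) : ℝ≥0∞) ^ e := by
  rw [Kabs]
  split
  · exact bot_le
  · rename_i hx0
    refine ENNReal.zpow_le_of_le (qE_one_lt (F := F)).le ?_
    by_contra hcon
    push_neg at hcon
    exact HahnSeries.coeff_order_eq_zero.not.2 hx0 (hx _ (by omega))

theorem Kle_of_Kabs_le {e : ℤ} {x : Kinf F}
    (hx : Kabs (Fintype.card F) x ≤ ((Fintype.card F : ℕ) : ℝ≥0∞) ^ e) : Kle e x := by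
  by_cases hx0 : x = 0
  · exact hx0 ▸ Kle_zero e
  · rw [Kabs, if_neg hx0] at hx
    have horder : -e ≤ x.order := by
      by_contra hcon
      push_neg at hcon
      exact absurd hx (not_le_of_gt (qE_zpow_lt (by omega)))
    intro k hk
    exact HahnSeries.coeff_eq_zero_of_lt_order (by omega)

theorem Kle_of_Kabs_lt_one {x : Kinf F} (hx : Kabs (Fintype.card F) x < 1) : Kle (-1) x := by
  by_cases hx0 : x = 0
  · exact hx0 ▸ Kle_zero _
  · rw [Kabs, if_neg hx0] at hx
    have horder : 1 ≤ x.order := by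
      by_contra hcon
      push_neg at hcon
      have : ((Fintype.card F : ℕ) : ℝ≥0∞) ^ (0 : ℤ) ≤
          ((Fintype.card F : ℕ) : ℝ≥0∞) ^ (-x.order) :=
        ENNReal.zpow_le_of_le (qE_one_lt (F := F)).le (by omega)
      simp only [zpow_zero] at this
      exact absurd hx (not_lt_of_ge this)
    intro k hk
    exact HahnSeries.coeff_eq_zero_of_lt_order (by omega)

theorem qE_zpow_neg_one_lt_one : ((Fintype.card F : ℕ) : ℝ≥0∞) ^ (-1 : ℤ) < 1 := by
  have := qE_zpow_lt (F := F) (a := -1) (b := 0) (by omega)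
  simpa using this

theorem gnorm_le_of_Gle {e : ℤ} {f : TS F} (hf : Gle e f) :
    gnorm F f ≤ ((Fintype.card F : ℕ) : ℝ≥0∞) ^ e :=
  iSup_le fun i => Kabs_le_of_Kle (hf i)

theorem Gle_of_gnorm_le {e : ℤ} {f : TS F}
    (hf : gnorm F f ≤ ((Fintype.card F : ℕ) : ℝ≥0∞) ^ e) : Gle e f :=
  fun i => Kle_of_Kabs_le ((le_iSup (fun j => Kabs (Fintype.card F) (coeffT F j f)) i).trans hf)

theorem gnorm_lt_one_iff {f : TS F} : gnorm F f < 1 ↔ Gle (-1) f := by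
  constructor
  · intro h i
    exact Kle_of_Kabs_lt_one
      (lt_of_le_of_lt (le_iSup (fun j => Kabs (Fintype.card F) (coeffT F j f)) i) h)
  · intro h
    exact lt_of_le_of_lt (gnorm_le_of_Gle h) qE_zpow_neg_one_lt_one

theorem exists_qE_zpow_le {ε : ℝ≥0∞} (hε : 0 < ε) :
    ∃ e : ℤ, ((Fintype.card F : ℕ) : ℝ≥0∞) ^ e ≤ ε := by
  obtain ⟨n, hn⟩ := ENNReal.exists_inv_two_pow_lt hε.ne'
  refine ⟨-(n : ℤ), le_trans (le_trans ?_ (le_of_eq rfl)) hn.le⟩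
  have h2 : (2 : ℝ≥0∞) ≤ ((Fintype.card F : ℕ) : ℝ≥0∞) := by
    have : 2 ≤ Fintype.card F := Fintype.one_lt_card
    exact_mod_cast this
  calc ((Fintype.card F : ℕ) : ℝ≥0∞) ^ (-(n : ℤ))
      = (((Fintype.card F : ℕ) : ℝ≥0∞) ^ n)⁻¹ := by
        rw [ENNReal.zpow_neg, zpow_natCast]
  _ ≤ ((2 : ℝ≥0∞) ^ n)⁻¹ := by
        exact ENNReal.inv_le_inv.2 (pow_le_pow_left' h2 n)
  _ = 2⁻¹ ^ n := by rw [ENNReal.inv_pow]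

/-- Reformulation of membership in the Tate algebra. -/
theorem isTate_iff {f : TS F} :
    IsTate F f ↔ ∀ e : ℤ, ∃ N : ℕ, ∀ i, N ≤ i → Kle e (coeffT F i f) := by
  rw [IsTate, ENNReal.tendsto_atTop_zero]
  constructor
  · intro H e
    obtain ⟨N, hN⟩ := H (((Fintype.card F : ℕ) : ℝ≥0∞) ^ e)
      (ENNReal.zpow_pos qE_ne_zero qE_ne_top e)
    exact ⟨N, fun i hi => Kle_of_Kabs_le (hN i hi)⟩
  · intro H ε hε
    obtain ⟨e, he⟩ := exists_qE_zpow_le (F := F) hε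
    obtain ⟨N, hN⟩ := H e
    exact ⟨N, fun i hi => le_trans (Kabs_le_of_Kle (hN i hi)) he⟩

/-- Reformulation of Gauss-norm convergence. -/
theorem TT_iff {s : ℕ → TS F} {L : TS F} :
    TT F s L ↔ ∀ e : ℤ, ∃ N₀ : ℕ, ∀ N, N₀ ≤ N → Gle e (L - s N) := by
  rw [TT, ENNReal.tendsto_atTop_zero]
  constructor
  · intro H e
    obtain ⟨N₀, hN⟩ := H (((Fintype.card F : ℕ) : ℝ≥0∞) ^ e)
      (ENNReal.zpow_pos qE_ne_zero qE_ne_top e)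
    exact ⟨N₀, fun N hN' => Gle_of_gnorm_le (hN N hN')⟩
  · intro H ε hε
    obtain ⟨e, he⟩ := exists_qE_zpow_le (F := F) hε
    obtain ⟨N₀, hN⟩ := H e
    exact ⟨N₀, fun N hN' => le_trans (gnorm_le_of_Gle (hN N hN')) he⟩

theorem hahn_sum_coeff {α : Type*} (s : Finset α) (f : α → Kinf F) (k : ℤ) :
    (∑ a ∈ s, f a).coeff k = ∑ a ∈ s, (f a).coeff k := by
  classical
  induction s using Finset.induction_on with
  | empty => simp
  | insert _ _ hnotmem ih =>
    rw [Finset.sum_insert hnotmem, Finset.sum_insert hnotmem, HahnSeries.coeff_add, ih]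

theorem theta_pow (e : ℕ) : theta F ^ e = HahnSeries.single (-(e : ℤ)) (1 : F) := by
  rw [theta, HahnSeries.single_pow]
  congr 1
  · simp
  · simp

theorem polyK_apply (Q : Polynomial F) :
    polyK F Q = ∑ e ∈ Q.support, HahnSeries.single (-(e : ℤ)) (Q.coeff e) := by
  rw [polyK, Polynomial.coe_eval₂RingHom, Polynomial.eval₂_eq_sum, Polynomial.sum_def]
  refine Finset.sum_congr rfl fun e _ => ?_
  rw [theta_pow, HahnSeries.C_apply, HahnSeries.single_mul_single, zero_add, mul_one]

theorem polyK_coeff (Q : Polynomial F) (k : ℕ) :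
    (polyK F Q).coeff (-(k : ℤ)) = Q.coeff k := by
  classical
  rw [polyK_apply, hahn_sum_coeff]
  rw [Finset.sum_eq_single k]
  · rw [HahnSeries.coeff_single_same]
  · intro e _ hne
    exact HahnSeries.coeff_single_of_ne (by simpa using fun hh => hne hh.symm)
  · intro hk
    rw [HahnSeries.coeff_single_same, Polynomial.notMem_support_iff.1 hk]

theorem polyK_coeff_pos (Q : Polynomial F) {j : ℤ} (hj : 0 < j) : (polyK F Q).coeff j = 0 := by
  rw [polyK_apply, hahn_sum_coeff]
  apply Finset.sum_eq_zero
  intro e _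
  exact HahnSeries.coeff_single_of_ne (by omega)

theorem Kle_polyK_of_degree_lt {Q : Polynomial F} {d : ℕ} (hQ : Q.degree < (d : ℕ)) :
    Kle ((d : ℤ) - 1) (polyK F Q) := by
  intro k hk
  rcases le_or_gt k 0 with h0 | h0
  · have hm : ((-k).toNat : ℤ) = -k := Int.toNat_of_nonneg (by omega)
    have hk' : k = -(((-k).toNat : ℕ) : ℤ) := by omega
    rw [hk', polyK_coeff]
    apply Polynomial.coeff_eq_zero_of_degree_lt
    refine lt_of_lt_of_le hQ ?_
    have hdm : d ≤ (-k).toNat := by omega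
    exact_mod_cast hdm
  · exact polyK_coeff_pos Q h0

theorem polyK_eq_zero_of_Kle {Q : Polynomial F} (h : Kle (-1) (polyK F Q)) : Q = 0 := by
  ext k
  rw [Polynomial.coeff_zero, ← polyK_coeff]
  exact h _ (by omega)

theorem polyT_coeff (R : Polynomial (Polynomial F)) (i : ℕ) :
    coeffT F i (polyT F R) = polyK F (R.coeff i) := by
  classical
  rw [polyT, Polynomial.coe_eval₂RingHom, Polynomial.eval₂_eq_sum, Polynomial.sum_def]
  rw [coeffT, map_sum]
  have : ∀ e ∈ R.support,
      (PowerSeries.coeff (R := Kinf F) i) (((PowerSeries.C (R := Kinf F)).comp (polyK F)) (R.coeff e)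
        * PowerSeries.X ^ e) = if i = e then polyK F (R.coeff e) else 0 := by
    intro e _
    rw [RingHom.comp_apply, PowerSeries.coeff_C_mul, PowerSeries.coeff_X_pow]
    split <;> simp
  rw [Finset.sum_congr rfl this, Finset.sum_ite_eq]
  split
  · rfl
  · rename_i hi
    rw [Polynomial.notMem_support_iff.1 hi, map_zero]

theorem poly_coeff_sum {S : Type*} [Semiring S] (g : ℕ → S) (N k : ℕ) :
    (∑ i ∈ Finset.range N, Polynomial.C (g i) * Polynomial.X ^ i).coeff k
      = if k < N then g k else 0 := by
  classical
  rw [Polynomial.finset_sum_coeff]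
  simp only [Polynomial.coeff_C_mul, Polynomial.coeff_X_pow, mul_ite, mul_one, mul_zero]
  rw [Finset.sum_ite_eq]
  simp [Finset.mem_range]

/-- The truncated polynomial part of a Laurent series. -/
def Qof (d : ℕ) (x : Kinf F) : Polynomial F :=
  ∑ k ∈ Finset.range d, Polynomial.C (x.coeff (-(k : ℤ))) * Polynomial.X ^ k

theorem Qof_coeff (d : ℕ) (x : Kinf F) (k : ℕ) :
    (Qof d x).coeff k = if k < d then x.coeff (-(k : ℤ)) else 0 :=
  poly_coeff_sum _ d k

theorem Qof_degree (d : ℕ) (x : Kinf F) : (Qof d x).degree < (d : ℕ) := by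
  rw [Polynomial.degree_lt_iff_coeff_zero]
  intro m hm
  rw [Qof_coeff, if_neg (by exact_mod_cast not_lt_of_ge (by exact_mod_cast hm))]

theorem Kle_sub_polyK_Qof {x : Kinf F} {d : ℕ} (hx : Kle ((d : ℤ) - 1) x) :
    Kle (-1) (x - polyK F (Qof d x)) := by
  intro k hk
  rw [HahnSeries.coeff_sub]
  rcases le_or_gt k 0 with h0 | h0
  · have hm : ((-k).toNat : ℤ) = -k := Int.toNat_of_nonneg (by omega)
    have hk' : k = -(((-k).toNat : ℕ) : ℤ) := by omega
    rw [hk', polyK_coeff, Qof_coeff]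
    split
    · rw [sub_self]
    · rename_i hd
      rw [sub_zero]
      apply hx
      omega
  · rw [polyK_coeff_pos _ h0, sub_zero]
    apply hx
    omega

/-- Decomposition of an element of the Tate algebra along `𝔽[θ,t] ⊕ 𝔪`. -/
theorem decompose (f : TS F) (d N : ℕ)
    (hb : ∀ i, Kle ((d : ℤ) - 1) (coeffT F i f))
    (hN : ∀ i, N ≤ i → Kle (-1) (coeffT F i f)) :
    ∃ R : Polynomial (Polynomial F), (∀ i, (R.coeff i).degree < (d : ℕ)) ∧
      Gle (-1) (f - polyT F R) := by
  classical
  refine ⟨∑ i ∈ Finset.range N, Polynomial.C (Qof d (coeffT F i f)) * Polynomial.X ^ i, ?_, ?_⟩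
  · intro i
    rw [poly_coeff_sum]
    split
    · exact Qof_degree d _
    · rw [Polynomial.degree_zero]
      exact_mod_cast WithBot.bot_lt_coe d
  · intro i
    rw [coeffT_sub, polyT_coeff, poly_coeff_sum]
    split
    · exact Kle_sub_polyK_Qof (hb i)
    · rename_i hi
      rw [map_zero, sub_zero]
      exact hN i (by omega)

/-- Reformulated Tate condition. -/
def TateB (f : TS F) : Prop := ∀ e : ℤ, ∃ N : ℕ, ∀ i, N ≤ i → Kle e (coeffT F i f)

theorem isTate_tateB {f : TS F} : IsTate F f ↔ TateB f := isTate_iff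

theorem tateB_bdd {f : TS F} (hf : TateB f) : ∃ B : ℤ, 0 ≤ B ∧ Gle B f := by
  obtain ⟨N, hN⟩ := hf 0
  have aux : ∀ M : ℕ, ∃ B : ℤ, 0 ≤ B ∧ ∀ i, i < M → Kle B (coeffT F i f) := by
    intro M
    induction M with
    | zero => exact ⟨0, le_refl _, fun i hi => absurd hi (by omega)⟩
    | succ M ih =>
      obtain ⟨B, hB0, hB⟩ := ih
      obtain ⟨e, he0, he⟩ := Kle_exists (coeffT F M f)
      refine ⟨max B e, le_trans hB0 (le_max_left _ _), fun i hi => ?_⟩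
      rcases lt_or_ge i M with h | h
      · exact (hB i h).mono (le_max_left _ _)
      · have : i = M := by omega
        rw [this]
        exact he.mono (le_max_right _ _)
  obtain ⟨B, hB0, hB⟩ := aux N
  refine ⟨B, hB0, fun i => ?_⟩
  rcases lt_or_ge i N with h | h
  · exact hB i h
  · exact (hN i h).mono hB0

theorem TateB.mul {f g : TS F} (hf : TateB f) (hg : TateB g) : TateB (f * g) := by
  obtain ⟨Bf, hBf0, hBf⟩ := tateB_bdd hf
  obtain ⟨Bg, hBg0, hBg⟩ := tateB_bdd hg
  intro e
  obtain ⟨N₁, hN₁⟩ := hf (e - Bg)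
  obtain ⟨N₂, hN₂⟩ := hg (e - Bf)
  refine ⟨N₁ + N₂, fun i hi => ?_⟩
  have : coeffT F i (f * g) =
      ∑ p ∈ Finset.HasAntidiagonal.antidiagonal i, coeffT F p.1 f * coeffT F p.2 g := by
    simpa [coeffT] using PowerSeries.coeff_mul i f g
  rw [this]
  apply Kle_sum
  rintro ⟨k, j⟩ hp
  rw [Finset.HasAntidiagonal.mem_antidiagonal] at hp
  rcases le_or_gt N₁ k with hk | hk
  · exact (Kle_mul (hN₁ k hk) (hBg j)).mono (by omega)
  · exact (Kle_mul (hBf k) (hN₂ j (by omega))).mono (by omega)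

theorem TateB.sub {f g : TS F} (hf : TateB f) (hg : TateB g) : TateB (f - g) := by
  intro e
  obtain ⟨N₁, hN₁⟩ := hf e
  obtain ⟨N₂, hN₂⟩ := hg e
  refine ⟨N₁ + N₂, fun i hi => ?_⟩
  rw [coeffT_sub]
  exact Kle_sub (hN₁ i (by omega)) (hN₂ i (by omega))

theorem tateB_C (x : Kinf F) : TateB (PowerSeries.C (R := Kinf F) x) := by
  intro e
  refine ⟨1, fun i hi => ?_⟩
  simp only [coeffT, PowerSeries.coeff_C, if_neg (by omega : ¬ i = 0)]
  exact Kle_zero e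

theorem tateB_one : TateB (1 : TS F) := by
  intro e
  refine ⟨1, fun i hi => ?_⟩
  simp only [coeffT, PowerSeries.coeff_one, if_neg (by omega : ¬ i = 0)]
  exact Kle_zero e

theorem tateB_polyT (R : Polynomial (Polynomial F)) : TateB (polyT F R) := by
  intro e
  refine ⟨R.natDegree + 1, fun i hi => ?_⟩
  rw [polyT_coeff, Polynomial.coeff_eq_zero_of_natDegree_lt (by omega), map_zero]
  exact Kle_zero e

theorem Gle_prodPart_sub_one (n : ℕ) (N : ℕ) :
    Gle (-1) ((∏ j ∈ Finset.range N,
      (1 - tt F * PowerSeries.C (R := Kinf F) ((theta F)⁻¹ ^ Fintype.card F ^ j)) ^ n) - 1) := by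
  apply Gle_sub_one_prod
  intro j _
  apply Gle_sub_one_pow
  have hu : Kle (-1) ((theta F)⁻¹ ^ Fintype.card F ^ j : Kinf F) :=
    Kle_theta_inv_pow _ (Nat.one_le_iff_ne_zero.2 (pow_ne_zero _ Fintype.card_pos.ne'))
  have hmul : Gle (-1) (tt F * PowerSeries.C (R := Kinf F) ((theta F)⁻¹ ^ Fintype.card F ^ j)) := by
    have := Gle_mul (Gle_tt (F := F)) (Gle_C hu)
    simpa using this
  have heq : (1 - tt F * PowerSeries.C (R := Kinf F) ((theta F)⁻¹ ^ Fintype.card F ^ j)) - 1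
      = -(tt F * PowerSeries.C (R := Kinf F) ((theta F)⁻¹ ^ Fintype.card F ^ j)) := by ring
  rw [heq]
  exact Gle_neg hmul

theorem Gle_prodPart (n : ℕ) (N : ℕ) :
    Gle 0 (∏ j ∈ Finset.range N,
      (1 - tt F * PowerSeries.C (R := Kinf F) ((theta F)⁻¹ ^ Fintype.card F ^ j)) ^ n) := by
  have h := Gle_add ((Gle_prodPart_sub_one (F := F) n N).mono (by omega : (-1:ℤ) ≤ 0))
    (Gle_one (F := F))
  rwa [sub_add_cancel] at h

theorem constantCoeff_nuPartial (n h N : ℕ) :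
    PowerSeries.constantCoeff (R := Kinf F) (nuPartial F n h N) = (-theta F)⁻¹ ^ h := by
  simp [nuPartial, tt]

/-- A power series `s` with `s ≡ 1 (mod 𝔪)` in the Tate algebra has a Tate inverse
of norm at most `1`. -/
theorem inverse_of_perturbation {s : TS F} (hs1 : PowerSeries.constantCoeff (R := Kinf F) s = 1)
    (hmG : Gle (-1) (s - 1)) (hmB : TateB (s - 1)) :
    ∃ w₀ : TS F, s * w₀ = 1 ∧ Gle 0 w₀ ∧ TateB w₀ := by
  classical
  refine ⟨s⁻¹, PowerSeries.mul_inv_cancel s (by rw [hs1]; exact one_ne_zero), ?_, ?_⟩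
  all_goals {
    have hsw : s * s⁻¹ = 1 := PowerSeries.mul_inv_cancel s (by rw [hs1]; exact one_ne_zero)
    have hid : s⁻¹ = 1 - (s - 1) * s⁻¹ := by linear_combination hsw
    have hm0 : coeffT F 0 (s - 1) = 0 := by
      rw [coeffT_sub]
      have e1 : coeffT F 0 s = PowerSeries.constantCoeff (R := Kinf F) s := by
        simp [coeffT, PowerSeries.coeff_zero_eq_constantCoeff]
      have e2 : coeffT F 0 (1 : TS F) = 1 := by simp [coeffT]
      rw [e1, e2, hs1, sub_self]
    have hcoeff1 : ∀ i : ℕ, Kle 0 (coeffT F i (1 : TS F)) := Gle_one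
    have hmulco : ∀ i : ℕ, ∀ u v : TS F, coeffT F i (u * v) =
        ∑ p ∈ Finset.HasAntidiagonal.antidiagonal i, coeffT F p.1 u * coeffT F p.2 v := by
      intro i u v
      simpa [coeffT] using PowerSeries.coeff_mul i u v
    have claimA : ∀ i, Kle 0 (coeffT F i s⁻¹) := by
      intro i
      induction i using Nat.strong_induction_on with
      | _ i IH =>
        rw [hid, coeffT_sub]
        refine Kle_sub (hcoeff1 i) ?_
        rw [hmulco]
        apply Kle_sum
        rintro ⟨k, j⟩ hp
        rw [Finset.HasAntidiagonal.mem_antidiagonal] at hp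
        rcases Nat.eq_zero_or_pos k with hk | hk
        · rw [hk, hm0, zero_mul]
          exact Kle_zero 0
        · exact (Kle_mul (hmG k) (IH j (by omega))).mono (by omega)
    have claimB : ∀ r : ℕ, ∃ N : ℕ, ∀ i, N ≤ i → Kle (-(r : ℤ)) (coeffT F i s⁻¹) := by
      intro r
      induction r with
      | zero => exact ⟨0, fun i _ => by simpa using claimA i⟩
      | succ r ih =>
        obtain ⟨N₁, h₁⟩ := ih
        obtain ⟨N₂, h₂⟩ := hmB (-(r : ℤ) - 1)
        refine ⟨N₁ + N₂ + 1, fun i hi => ?_⟩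
        rw [hid, coeffT_sub]
        refine Kle_sub ?_ ?_
        · simp only [coeffT, PowerSeries.coeff_one, if_neg (by omega : ¬ i = 0)]
          exact Kle_zero _
        · rw [hmulco]
          apply Kle_sum
          rintro ⟨k, j⟩ hp
          rw [Finset.HasAntidiagonal.mem_antidiagonal] at hp
          rcases le_or_gt N₂ k with hk | hk
          · exact (Kle_mul (h₂ k hk) (claimA j)).mono (by push_cast; omega)
          · rcases Nat.eq_zero_or_pos k with hk0 | hk0
            · rw [hk0, hm0, zero_mul]
              exact Kle_zero _
            · exact (Kle_mul (hmG k) (h₁ j (by omega))).mono (by push_cast; omega)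
    first
    | exact claimA
    | · intro e
        obtain ⟨N, hN⟩ := claimB (-e).toNat
        have he : -(((-e).toNat : ℕ) : ℤ) ≤ e := by
          have := Int.self_le_toNat (-e); omega
        exact ⟨N, fun i hi => (hN i hi).mono he⟩ }

/-- The limit `ν` of the partial products is invertible in the Tate algebra,
with `‖ν‖ ≤ q^{-h}` and `‖ν⁻¹‖ ≤ q^h`. -/
theorem nu_inverse (n h : ℕ) (ν : TS F) (hν : IsTate F ν) (hνc : TT F (nuPartial F n h) ν) :
    ∃ w : TS F, ν * w = 1 ∧ TateB w ∧ Gle (h : ℤ) w ∧ Gle (-(h : ℤ)) ν ∧ TateB ν ∧ ν ≠ 0 := by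
  classical
  have Hc := (TT_iff (F := F)).1 hνc
  have hνB : TateB ν := isTate_tateB.1 hν
  have hc0 : ((-theta F)⁻¹ ^ h : Kinf F) ≠ 0 := c_ne_zero h
  have hKle_cinv : Kle (h : ℤ) (((-theta F)⁻¹ ^ h)⁻¹ : Kinf F) := by
    rw [c_inv]; exact Kle_negtheta_pow h
  -- norm bound for the partial products
  have hGleP : ∀ N, Gle (-(h : ℤ)) (nuPartial F n h N) := by
    intro N
    rw [nuPartial]
    have := Gle_mul (Gle_C (Kle_negtheta_inv_pow (F := F) h)) (Gle_prodPart (F := F) n N)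
    simpa using this
  -- norm bound for ν
  have hGleν : Gle (-(h : ℤ)) ν := by
    obtain ⟨N₀, hN₀⟩ := Hc (-(h : ℤ))
    have h1 := Gle_add (hN₀ N₀ (le_refl _)) (hGleP N₀)
    rwa [sub_add_cancel] at h1
  -- the constant coefficient of ν
  have hν₀ : PowerSeries.constantCoeff (R := Kinf F) ν = (-theta F)⁻¹ ^ h := by
    have key : ∀ e : ℤ, Kle e (PowerSeries.constantCoeff (R := Kinf F) ν - (-theta F)⁻¹ ^ h) := by
      intro e
      obtain ⟨N₁, hN₁⟩ := Hc e
      have h2 := hN₁ N₁ (le_refl _) 0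
      rw [coeffT_sub] at h2
      have e1 : coeffT F 0 ν = PowerSeries.constantCoeff (R := Kinf F) ν := by
        simp [coeffT, PowerSeries.coeff_zero_eq_constantCoeff]
      have e2 : coeffT F 0 (nuPartial F n h N₁) = (-theta F)⁻¹ ^ h := by
        have := constantCoeff_nuPartial (F := F) n h N₁
        simpa [coeffT, PowerSeries.coeff_zero_eq_constantCoeff] using this
      rwa [e1, e2] at h2
    exact sub_eq_zero.1 (K_eq_zero_of_forall_Kle key)
  have hν0 : ν ≠ 0 := by
    intro hzero
    rw [hzero, map_zero] at hν₀
    exact hc0 hν₀.symm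
  -- the normalized series s = C c⁻¹ * ν
  have hs1 : PowerSeries.constantCoeff (R := Kinf F)
      (PowerSeries.C (R := Kinf F) (((-theta F)⁻¹ ^ h)⁻¹) * ν) = 1 := by
    rw [map_mul, PowerSeries.constantCoeff_C, hν₀, inv_mul_cancel₀ hc0]
  have hmG : Gle (-1) (PowerSeries.C (R := Kinf F) (((-theta F)⁻¹ ^ h)⁻¹) * ν - 1) := by
    obtain ⟨N₂, hN₂⟩ := Hc (-1 - (h : ℤ))
    have hA : Gle (-1) (PowerSeries.C (R := Kinf F) (((-theta F)⁻¹ ^ h)⁻¹) *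
        (ν - nuPartial F n h N₂)) := by
      have := Gle_mul (Gle_C hKle_cinv) (hN₂ N₂ (le_refl _))
      exact this.mono (by omega)
    have hBeq : PowerSeries.C (R := Kinf F) (((-theta F)⁻¹ ^ h)⁻¹) * nuPartial F n h N₂
        = ∏ j ∈ Finset.range N₂,
          (1 - tt F * PowerSeries.C (R := Kinf F) ((theta F)⁻¹ ^ Fintype.card F ^ j)) ^ n := by
      rw [nuPartial, ← mul_assoc, ← map_mul, inv_mul_cancel₀ hc0, map_one, one_mul]
    have hBG : Gle (-1) (PowerSeries.C (R := Kinf F) (((-theta F)⁻¹ ^ h)⁻¹) *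
        nuPartial F n h N₂ - 1) := by
      rw [hBeq]
      exact Gle_prodPart_sub_one n N₂
    have hsplit : PowerSeries.C (R := Kinf F) (((-theta F)⁻¹ ^ h)⁻¹) * ν - 1
        = PowerSeries.C (R := Kinf F) (((-theta F)⁻¹ ^ h)⁻¹) * (ν - nuPartial F n h N₂)
          + (PowerSeries.C (R := Kinf F) (((-theta F)⁻¹ ^ h)⁻¹) * nuPartial F n h N₂ - 1) := by
      ring
    rw [hsplit]
    exact Gle_add hA hBG
  have hmB : TateB (PowerSeries.C (R := Kinf F) (((-theta F)⁻¹ ^ h)⁻¹) * ν - 1) :=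
    ((tateB_C _).mul hνB).sub tateB_one
  obtain ⟨w₀, hsw, hw₀G, hw₀B⟩ := inverse_of_perturbation hs1 hmG hmB
  refine ⟨PowerSeries.C (R := Kinf F) (((-theta F)⁻¹ ^ h)⁻¹) * w₀, ?_, (tateB_C _).mul hw₀B, ?_,
    hGleν, hνB, hν0⟩
  · rw [show ν * (PowerSeries.C (R := Kinf F) (((-theta F)⁻¹ ^ h)⁻¹) * w₀)
      = (PowerSeries.C (R := Kinf F) (((-theta F)⁻¹ ^ h)⁻¹) * ν) * w₀ by ring, hsw]
  · have := Gle_mul (Gle_C hKle_cinv) hw₀G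
    simpa using this

end S4aux

/-- Let `n ≥ 1`, written `n = h(q−1) + δ` with `0 ≤ δ < q−1`.  Then one
has the internal direct sum decompositions of `𝔽[t]`-modules
`K∞⟨t⟩ = 𝔽[θ,t]·ν_n ⊕ 𝔪_∞⟨t⟩·ν_n` and
`𝔪_∞⟨t⟩ = 𝔽[θ,t]_{deg_θ<h}·ν_n ⊕ 𝔪_∞⟨t⟩·ν_n`
(each encoded by existence and uniqueness of the decomposition of every element, together
with the containment `𝔽[θ,t]_{deg_θ<h}·ν_n ⊆ 𝔪_∞⟨t⟩`). -/
theorem statement4 (q n h δ : ℕ) (hq : q = Fintype.card F) (hn : 1 ≤ n)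
    (hdiv : n = h * (q - 1) + δ) (hδ : δ < q - 1)
    (ν : TS F) (hν : IsTate F ν) (hνc : TT F (nuPartial F n h) ν) :
    -- `K∞⟨t⟩ = 𝔽[θ,t]·ν_n ⊕ 𝔪_∞⟨t⟩·ν_n`
    ((∀ f : TS F, IsTate F f →
        ∃ P ∈ PolyTT F, ∃ g : TS F, IsTate F g ∧ gnorm F g < 1 ∧ f = P * ν + g * ν) ∧
     (∀ P ∈ PolyTT F, ∀ P' ∈ PolyTT F,
        ∀ g g' : TS F, IsTate F g → gnorm F g < 1 → IsTate F g' → gnorm F g' < 1 →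
          P * ν + g * ν = P' * ν + g' * ν → P = P' ∧ g = g')) ∧
    -- `𝔽[θ,t]_{deg_θ<h}·ν_n ⊆ 𝔪_∞⟨t⟩`
    (∀ P ∈ PolyDegLt F h, IsTate F (P * ν) ∧ gnorm F (P * ν) < 1) ∧
    -- `𝔪_∞⟨t⟩ = 𝔽[θ,t]_{deg_θ<h}·ν_n ⊕ 𝔪_∞⟨t⟩·ν_n`
    ((∀ f : TS F, IsTate F f → gnorm F f < 1 →
        ∃ P ∈ PolyDegLt F h, ∃ g : TS F, IsTate F g ∧ gnorm F g < 1 ∧ f = P * ν + g * ν) ∧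
     (∀ P ∈ PolyDegLt F h, ∀ P' ∈ PolyDegLt F h,
        ∀ g g' : TS F, IsTate F g → gnorm F g < 1 → IsTate F g' → gnorm F g' < 1 →
          P * ν + g * ν = P' * ν + g' * ν → P = P' ∧ g = g')) := by
  classical
  obtain ⟨w, hνw, hwB, hwG, hGν, hνB, hν0⟩ := nu_inverse n h ν hν hνc
  -- decomposition machine
  have decompose_fw : ∀ f : TS F, TateB f → ∀ d : ℕ,
      (∀ i, Kle ((d : ℤ) - 1) (coeffT F i (f * w))) →
      ∃ R : Polynomial (Polynomial F), (∀ i, (R.coeff i).degree < (d : ℕ)) ∧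
        IsTate F (f * w - polyT F R) ∧ gnorm F (f * w - polyT F R) < 1 ∧
        f = polyT F R * ν + (f * w - polyT F R) * ν := by
    intro f hf d hb
    have hfw : TateB (f * w) := hf.mul hwB
    obtain ⟨N, hN⟩ := hfw (-1)
    obtain ⟨R, hdeg, hG⟩ := decompose (f * w) d N hb hN
    refine ⟨R, hdeg, isTate_tateB.2 (hfw.sub (tateB_polyT R)), gnorm_lt_one_iff.2 hG, ?_⟩
    have hring : polyT F R * ν + (f * w - polyT F R) * ν = f * (ν * w) := by ring
    rw [hring, hνw, mul_one]
  -- uniqueness machine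
  have uniq : ∀ (R R' : Polynomial (Polynomial F)) (g g' : TS F), Gle (-1) g → Gle (-1) g' →
      polyT F R * ν + g * ν = polyT F R' * ν + g' * ν → polyT F R = polyT F R' ∧ g = g' := by
    intro R R' g g' hg hg' heq
    have hsum : (polyT F R + g) * ν = (polyT F R' + g') * ν := by linear_combination heq
    have hcan : polyT F R + g = polyT F R' + g' := mul_right_cancel₀ hν0 hsum
    have hdiff : polyT F (R - R') = g' - g := by rw [map_sub]; linear_combination hcan
    have hG : Gle (-1) (polyT F (R - R')) := hdiff ▸ Gle_sub hg' hg
    have hzero : R - R' = 0 := by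
      have hco : ∀ i, (R - R').coeff i = 0 := by
        intro i
        apply polyK_eq_zero_of_Kle
        have := hG i
        rwa [polyT_coeff] at this
      exact Polynomial.ext fun i => by rw [hco i, Polynomial.coeff_zero]
    have hRR : polyT F R = polyT F R' := by rw [sub_eq_zero.1 hzero]
    refine ⟨hRR, ?_⟩
    rw [hRR] at hcan
    exact add_left_cancel hcan
  refine ⟨⟨?_, ?_⟩, ?_, ?_, ?_⟩
  · -- existence, general decomposition
    intro f hfT
    have hf := isTate_tateB.1 hfT
    obtain ⟨B, hB0, hBf⟩ := tateB_bdd (hf.mul hwB)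
    have hb : ∀ i, Kle ((B.toNat + 1 : ℕ) - 1 : ℤ) (coeffT F i (f * w)) := by
      intro i
      refine (hBf i).mono ?_
      have := Int.self_le_toNat B
      push_cast
      omega
    obtain ⟨R, hdeg, hT, hlt, heq⟩ := decompose_fw f hf (B.toNat + 1) hb
    exact ⟨polyT F R, ⟨R, rfl⟩, f * w - polyT F R, hT, hlt, heq⟩
  · -- uniqueness, general decomposition
    rintro P ⟨R, hR⟩ P' ⟨R', hR'⟩ g g' hgT hg hg'T hg' heq
    rw [← hR, ← hR'] at heq
    obtain ⟨h1, h2⟩ := uniq R R' g g' (gnorm_lt_one_iff.1 hg) (gnorm_lt_one_iff.1 hg') heq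
    exact ⟨by rw [← hR, ← hR', h1], h2⟩
  · -- containment of 𝔽[θ,t]_{<h}·ν in 𝔪
    rintro P ⟨R, hdeg, hR⟩
    have hPB : TateB P := by rw [hR]; exact tateB_polyT R
    have hPG : Gle ((h : ℤ) - 1) P := by
      rw [hR]
      intro i
      rw [polyT_coeff]
      exact Kle_polyK_of_degree_lt (hdeg i)
    refine ⟨isTate_tateB.2 (hPB.mul hνB), gnorm_lt_one_iff.2 ?_⟩
    exact (Gle_mul hPG hGν).mono (by omega)
  · -- existence, decomposition of 𝔪
    intro f hfT hflt
    have hf := isTate_tateB.1 hfT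
    have hb : ∀ i, Kle ((h : ℤ) - 1) (coeffT F i (f * w)) := by
      intro i
      exact ((Gle_mul (gnorm_lt_one_iff.1 hflt) hwG) i).mono (by omega)
    obtain ⟨R, hdeg, hT, hlt, heq⟩ := decompose_fw f hf h hb
    exact ⟨polyT F R, ⟨R, hdeg, rfl⟩, f * w - polyT F R, hT, hlt, heq⟩
  · -- uniqueness, decomposition of 𝔪
    rintro P ⟨R, _, hR⟩ P' ⟨R', _, hR'⟩ g g' hgT hg hg'T hg' heq
    rw [hR, hR'] at heq
    obtain ⟨h1, h2⟩ := uniq R R' g g' (gnorm_lt_one_iff.1 hg) (gnorm_lt_one_iff.1 hg') heq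
    exact ⟨by rw [hR, hR', h1], h2⟩

end Carlitz
end
end

section
/- Let n ≥ 1 be an integer and let e ∈ K_∞⟨t⟩ with ‖e‖ < q^n. Then the series ξ_e := ∑_{k=0}^∞ e^{(k)} · ∏_{i=0}^{k} (t−θ^{q^i})^{−n} converges in K_∞⟨t⟩, satisfies ‖ξ_e‖ < 1, and solves the difference equation (t−θ)^n ξ_e − ξ_e^{(1)} = e. -/
open scoped Classical ENNReal
open Filter

noncomputable section

namespace Carlitz

variable (F : Type) [Field F] [Fintype F]

/-! ### Auxiliary development for Statement 9 -/

section Aux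

set_option linter.unusedSectionVars false
set_option linter.unusedVariables false

variable {F}

/-- `|x| ≤ q^{-m}`, phrased coefficientwise: the support of `x` is contained in `[m, ∞)`. -/
def DLe (m : ℤ) (x : Kinf F) : Prop := ∀ j : ℤ, j < m → x.coeff j = 0

lemma DLe_mono {m m' : ℤ} {x : Kinf F} (h : DLe m x) (hm : m' ≤ m) : DLe m' x :=
  fun j hj => h j (lt_of_lt_of_le hj hm)

lemma DLe_zero (m : ℤ) : DLe m (0 : Kinf F) := fun j _ => HahnSeries.coeff_zero

lemma DLe_add {m : ℤ} {x y : Kinf F} (hx : DLe m x) (hy : DLe m y) : DLe m (x + y) :=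
  fun j hj => by rw [HahnSeries.coeff_add, hx j hj, hy j hj, add_zero]

lemma DLe_neg {m : ℤ} {x : Kinf F} (hx : DLe m x) : DLe m (-x) :=
  fun j hj => by rw [HahnSeries.coeff_neg, hx j hj, neg_zero]

lemma DLe_sub {m : ℤ} {x y : Kinf F} (hx : DLe m x) (hy : DLe m y) : DLe m (x - y) := by
  rw [sub_eq_add_neg]; exact DLe_add hx (DLe_neg hy)

lemma DLe_mul {a b : ℤ} {x y : Kinf F} (hx : DLe a x) (hy : DLe b y) : DLe (a + b) (x * y) := by
  intro j hj
  rw [HahnSeries.coeff_mul]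
  refine Finset.sum_eq_zero fun ij hij => ?_
  rw [Finset.mem_addAntidiagonal] at hij
  by_cases h1 : ij.1 < a
  · rw [hx _ h1, zero_mul]
  · have h2 : ij.2 < b := by omega
    rw [hy _ h2, mul_zero]

lemma DLe_single {m s : ℤ} (r : F) (h : m ≤ s) : DLe m (HahnSeries.single s r : Kinf F) :=
  fun j hj => HahnSeries.coeff_single_of_ne (by omega)

lemma DLe_one : DLe 0 (1 : Kinf F) := by
  rw [← HahnSeries.single_zero_one]; exact DLe_single _ le_rfl

lemma DLe_pow {m : ℤ} {x : Kinf F} (h : DLe m x) (k : ℕ) : DLe (k * m) (x ^ k) := by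
  induction k with
  | zero => simpa using DLe_one
  | succ k ih =>
    have h2 : ((k + 1 : ℕ) : ℤ) * m = (k : ℤ) * m + m := by push_cast; ring
    rw [pow_succ, h2]
    exact DLe_mul ih h

lemma DLe_finsum {m : ℤ} {ι : Type*} {s : Finset ι} {h : ι → Kinf F}
    (H : ∀ x ∈ s, DLe m (h x)) : DLe m (∑ x ∈ s, h x) := by
  classical
  induction s using Finset.induction_on with
  | empty => simpa using DLe_zero m
  | insert _ _ hx ih =>
    rw [Finset.sum_insert hx]
    exact DLe_add (H _ (Finset.mem_insert_self _ _))
      (ih fun x hxs => H x (Finset.mem_insert_of_mem hxs))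

/-- `‖f‖ ≤ q^{-m}` coefficientwise for power series. -/
def DLeT (m : ℤ) (f : TS F) : Prop := ∀ i : ℕ, DLe m (coeffT F i f)

lemma DLeT_mono {m m' : ℤ} {f : TS F} (h : DLeT m f) (hm : m' ≤ m) : DLeT m' f :=
  fun i => DLe_mono (h i) hm

lemma DLeT_zero (m : ℤ) : DLeT m (0 : TS F) := fun i => by
  simpa [coeffT] using DLe_zero (F := F) m

lemma DLeT_add {m : ℤ} {f g : TS F} (hf : DLeT m f) (hg : DLeT m g) : DLeT m (f + g) :=
  fun i => by simpa [coeffT, map_add] using DLe_add (hf i) (hg i)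

lemma DLeT_neg {m : ℤ} {f : TS F} (hf : DLeT m f) : DLeT m (-f) :=
  fun i => by simpa [coeffT, map_neg] using DLe_neg (hf i)

lemma DLeT_sub {m : ℤ} {f g : TS F} (hf : DLeT m f) (hg : DLeT m g) : DLeT m (f - g) :=
  fun i => by simpa [coeffT, map_sub] using DLe_sub (hf i) (hg i)

lemma DLeT_finsum {m : ℤ} {ι : Type*} {s : Finset ι} {h : ι → TS F}
    (H : ∀ x ∈ s, DLeT m (h x)) : DLeT m (∑ x ∈ s, h x) := by
  classical
  induction s using Finset.induction_on with
  | empty => simpa using DLeT_zero m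
  | insert _ _ hx ih =>
    rw [Finset.sum_insert hx]
    exact DLeT_add (H _ (Finset.mem_insert_self _ _))
      (ih fun x hxs => H x (Finset.mem_insert_of_mem hxs))

lemma DLeT_one : DLeT 0 (1 : TS F) := by
  intro i
  rw [coeffT, PowerSeries.coeff_one]
  split_ifs
  · exact DLe_one
  · exact DLe_zero 0

lemma DLeT_mul {a b : ℤ} {f g : TS F} (hf : DLeT a f) (hg : DLeT b g) :
    DLeT (a + b) (f * g) := by
  intro i
  rw [coeffT, PowerSeries.coeff_mul]
  exact DLe_finsum fun p _ => DLe_mul (hf p.1) (hg p.2)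

lemma DLeT_pow {m : ℤ} {f : TS F} (h : DLeT m f) (k : ℕ) : DLeT (k * m) (f ^ k) := by
  induction k with
  | zero => simpa using DLeT_one
  | succ k ih =>
    have h2 : ((k + 1 : ℕ) : ℤ) * m = (k : ℤ) * m + m := by push_cast; ring
    rw [pow_succ, h2]
    exact DLeT_mul ih h

lemma DLeT_prod {ι : Type*} {s : Finset ι} {m : ι → ℤ} {f : ι → TS F}
    (H : ∀ x ∈ s, DLeT (m x) (f x)) : DLeT (∑ x ∈ s, m x) (∏ x ∈ s, f x) := by
  classical
  induction s using Finset.induction_on with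
  | empty => simpa using DLeT_one
  | insert _ _ hx ih =>
    rw [Finset.sum_insert hx, Finset.prod_insert hx]
    exact DLeT_mul (H _ (Finset.mem_insert_self _ _))
      (ih fun x hxs => H x (Finset.mem_insert_of_mem hxs))

lemma coeffT_twist (f : TS F) (i : ℕ) :
    coeffT F i (twist F f) = coeffT F i f ^ Fintype.card F := by
  rw [twist, coeffT, PowerSeries.coeff_mk]

lemma DLeT_twist {m : ℤ} {f : TS F} (h : DLeT m f) :
    DLeT ((Fintype.card F : ℤ) * m) (twist F f) := by
  intro i
  rw [coeffT_twist]
  exact DLe_pow (h i) _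

lemma twistIter_succ' (k : ℕ) (f : TS F) :
    twistIter F (k + 1) f = twist F (twistIter F k f) := by
  rw [twistIter, twistIter, Function.iterate_succ_apply']

lemma twistIter_zero' (f : TS F) : twistIter F 0 f = f := rfl

lemma DLeT_twistIter {m : ℤ} {f : TS F} (h : DLeT m f) (k : ℕ) :
    DLeT ((Fintype.card F ^ k : ℕ) * m) (twistIter F k f) := by
  induction k with
  | zero => simpa [twistIter_zero'] using h
  | succ k ih =>
    have h2 : ((Fintype.card F ^ (k + 1) : ℕ) : ℤ) * m
        = (Fintype.card F : ℤ) * (((Fintype.card F ^ k : ℕ) : ℤ) * m) := by push_cast; ring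
    rw [twistIter_succ', h2]
    exact DLeT_twist ih

/-! #### Theta facts and explicit inverses -/

/-- `θ^{q^i}·(single (q^i) 1) = 1`. -/
lemma theta_mul_single (s : ℕ) :
    theta F ^ s * (HahnSeries.single ((s : ℤ)) 1 : Kinf F) = 1 := by
  have h1 : (HahnSeries.single ((s : ℤ)) 1 : Kinf F)
      = (HahnSeries.single (1 : ℤ) 1 : Kinf F) ^ s := by
    rw [HahnSeries.single_pow, one_pow, nsmul_eq_mul, mul_one]
  rw [h1, ← mul_pow, theta, HahnSeries.single_mul_single, neg_add_cancel, one_mul,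
    HahnSeries.single_zero_one, one_pow]

/-- `a i = θ^{-q^i}` as an explicit Hahn series. -/
def aa (F : Type) [Field F] [Fintype F] (i : ℕ) : Kinf F :=
  HahnSeries.single ((Fintype.card F ^ i : ℕ) : ℤ) 1

lemma theta_mul_aa (i : ℕ) : theta F ^ Fintype.card F ^ i * aa F i = 1 :=
  theta_mul_single _

lemma aa_pow (i s : ℕ) :
    aa F i ^ s = HahnSeries.single ((s * Fintype.card F ^ i : ℕ) : ℤ) (1 : F) := by
  rw [aa, HahnSeries.single_pow, one_pow, nsmul_eq_mul]
  norm_num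

/-- The factor `u_i = t - θ^{q^i}`. -/
def uu (F : Type) [Field F] [Fintype F] (i : ℕ) : TS F :=
  tt F - PowerSeries.C (R := Kinf F) (theta F ^ Fintype.card F ^ i)

/-- The explicit inverse of `u_i`. -/
def ww (F : Type) [Field F] [Fintype F] (i : ℕ) : TS F :=
  PowerSeries.mk fun j => -(aa F i ^ (j + 1))

lemma uu_mul_ww (i : ℕ) : uu F i * ww F i = 1 := by
  have hstep : ∀ m : ℕ, theta F ^ Fintype.card F ^ i * aa F i ^ (m + 1) = aa F i ^ m := by
    intro m
    rw [pow_succ', ← mul_assoc, theta_mul_aa, one_mul]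
  refine PowerSeries.ext fun m => ?_
  rcases m with - | m
  · rw [PowerSeries.coeff_zero_eq_constantCoeff_apply, uu, tt, sub_mul, map_sub, map_mul,
      PowerSeries.constantCoeff_X, zero_mul, map_mul, PowerSeries.constantCoeff_C,
      ← PowerSeries.coeff_zero_eq_constantCoeff_apply, ww, PowerSeries.coeff_mk,
      PowerSeries.coeff_one, if_pos rfl]
    linear_combination hstep 0
  · rw [uu, tt, sub_mul, map_sub, PowerSeries.coeff_succ_X_mul, PowerSeries.coeff_C_mul,
      ww, PowerSeries.coeff_mk, PowerSeries.coeff_mk, PowerSeries.coeff_one,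
      if_neg (Nat.succ_ne_zero m)]
    linear_combination hstep (m + 1)

lemma DLeT_ww (i : ℕ) : DLeT ((Fintype.card F ^ i : ℕ) : ℤ) (ww F i) := by
  intro j
  rw [ww, coeffT, PowerSeries.coeff_mk]
  refine DLe_neg ?_
  rw [aa_pow]
  refine DLe_single _ ?_
  have h1 : Fintype.card F ^ i ≤ (j + 1) * Fintype.card F ^ i :=
    Nat.le_mul_of_pos_left _ (Nat.succ_pos j)
  exact_mod_cast h1

lemma DLeT_uu0 : DLeT (-1) (uu F 0) := by
  intro i
  rw [uu, coeffT, map_sub]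
  refine DLe_sub ?_ ?_
  · rw [tt, PowerSeries.coeff_X]
    split_ifs
    · exact DLe_mono DLe_one (by norm_num)
    · exact DLe_zero _
  · rw [PowerSeries.coeff_C]
    split_ifs
    · rw [pow_zero, pow_one, theta]
      exact DLe_single _ le_rfl
    · exact DLe_zero _

/-- `W_k = ∏_{i=0}^{k} w_i^n`, the explicit inverse of `∏_{i=0}^k (t-θ^{q^i})^n`. -/
def WW (F : Type) [Field F] [Fintype F] (n k : ℕ) : TS F :=
  ∏ i ∈ Finset.range (k + 1), ww F i ^ n

/-- `P_k = ∏_{i=0}^{k} u_i^n`. -/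
def PP (F : Type) [Field F] [Fintype F] (n k : ℕ) : TS F :=
  ∏ i ∈ Finset.range (k + 1), uu F i ^ n

lemma PP_mul_WW (n k : ℕ) : PP F n k * WW F n k = 1 := by
  rw [PP, WW, ← Finset.prod_mul_distrib]
  refine Finset.prod_eq_one fun i _ => ?_
  rw [← mul_pow, uu_mul_ww, one_pow]

lemma PP_inv (n k : ℕ) : (PP F n k)⁻¹ = WW F n k := by
  have h1 := PP_mul_WW (F := F) n k
  have h2 : PowerSeries.constantCoeff (R := Kinf F) (PP F n k) ≠ 0 := by
    have h3 := congrArg (PowerSeries.constantCoeff (R := Kinf F)) h1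
    rw [map_mul, map_one] at h3
    exact left_ne_zero_of_mul_eq_one h3
  exact ((PowerSeries.eq_inv_iff_mul_eq_one h2).2 (by rw [mul_comm]; exact h1)).symm

lemma DLeT_WW (n k : ℕ) :
    DLeT (∑ i ∈ Finset.range (k + 1), (n : ℤ) * (Fintype.card F ^ i : ℕ)) (WW F n k) := by
  rw [WW]
  exact DLeT_prod fun i _ => DLeT_pow (DLeT_ww i) n

/-- `E_N`, the `N`-th partial sum of the series defining `ξ_e`. -/
def EE (F : Type) [Field F] [Fintype F] (n : ℕ) (e : TS F) (N : ℕ) : TS F :=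
  ∑ k ∈ Finset.range N, twistIter F k e * WW F n k

lemma xiPartial_eq_EE (n : ℕ) (e : TS F) (N : ℕ) : xiPartial F n e N = EE F n e N := by
  refine Finset.sum_congr rfl fun k _ => ?_
  rw [← PP_inv n k]
  rfl

/-! #### The crucial term bound -/

lemma card_pow_ge (k : ℕ) : (k : ℤ) + 1 ≤ ((Fintype.card F ^ k : ℕ) : ℤ) := by
  have h1 : k < Fintype.card F ^ k := Nat.lt_pow_self Fintype.one_lt_card
  exact_mod_cast h1

/-- The bound `‖e^{(k)} W_k‖ ≤ q^{-(k+1)}` given `‖e‖ ≤ q^{n-1}`. -/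
lemma DLeT_term {n : ℕ} {e : TS F} (he : DLeT (1 - n) e) (k : ℕ) :
    DLeT ((k : ℤ) + 1) (twistIter F k e * WW F n k) := by
  have h1 := DLeT_mul (DLeT_twistIter he k) (DLeT_WW n k)
  refine DLeT_mono h1 ?_
  rw [Finset.sum_range_succ]
  have h2 : (0 : ℤ) ≤ ∑ i ∈ Finset.range k, (n : ℤ) * (Fintype.card F ^ i : ℕ) :=
    Finset.sum_nonneg fun i _ => by positivity
  have h3 := card_pow_ge (F := F) k
  set Q : ℤ := ((Fintype.card F ^ k : ℕ) : ℤ) with hQ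
  have : Q * (1 - (n : ℤ)) + ((n : ℤ) * Q) = Q := by ring
  omega

lemma DLeT_EE_sub {n : ℕ} {e : TS F} (he : DLeT (1 - n) e) {N M : ℕ} (h : N ≤ M) :
    DLeT ((N : ℤ) + 1) (EE F n e M - EE F n e N) := by
  rw [EE, EE, ← Finset.sum_Ico_eq_sub _ h]
  refine DLeT_finsum fun k hk => ?_
  rw [Finset.mem_Ico] at hk
  have hk1 := hk.1
  exact DLeT_mono (DLeT_term he k) (by omega)

lemma DLeT_EE {n : ℕ} {e : TS F} (he : DLeT (1 - n) e) (N : ℕ) :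
    DLeT 1 (EE F n e N) := by
  have h1 := DLeT_EE_sub (F := F) he (Nat.zero_le N)
  simpa [EE] using h1

/-! #### The Frobenius and the twist as a ring homomorphism -/

lemma exists_frob : ∃ φ : Kinf F →+* Kinf F, ∀ x, φ x = x ^ Fintype.card F := by
  haveI hchar : CharP F (ringChar F) := ringChar.charP F
  obtain ⟨f0, hp, hcard⟩ := FiniteField.card F (ringChar F)
  haveI : CharP (Kinf F) (ringChar F) :=
    charP_of_injective_ringHom (f := (HahnSeries.C : F →+* Kinf F))
      HahnSeries.C_injective (ringChar F)
  haveI : ExpChar (Kinf F) (ringChar F) := ExpChar.prime hp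
  refine ⟨iterateFrobenius (Kinf F) (ringChar F) f0, fun x => ?_⟩
  rw [iterateFrobenius_def, hcard]

variable {φ : Kinf F →+* Kinf F}

lemma twist_eq_map (hφ : ∀ x, φ x = x ^ Fintype.card F) (f : TS F) :
    twist F f = PowerSeries.map φ f := by
  refine PowerSeries.ext fun i => ?_
  rw [twist, PowerSeries.coeff_mk, PowerSeries.coeff_map, hφ]
  rfl

lemma twist_mul (hφ : ∀ x, φ x = x ^ Fintype.card F) (f g : TS F) :
    twist F (f * g) = twist F f * twist F g := by
  rw [twist_eq_map hφ, twist_eq_map hφ, twist_eq_map hφ, map_mul]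

lemma twist_add (hφ : ∀ x, φ x = x ^ Fintype.card F) (f g : TS F) :
    twist F (f + g) = twist F f + twist F g := by
  rw [twist_eq_map hφ, twist_eq_map hφ, twist_eq_map hφ, map_add]

lemma twist_sub (hφ : ∀ x, φ x = x ^ Fintype.card F) (f g : TS F) :
    twist F (f - g) = twist F f - twist F g := by
  rw [twist_eq_map hφ, twist_eq_map hφ, twist_eq_map hφ, map_sub]

lemma aa_pow_card (i : ℕ) : aa F i ^ Fintype.card F = aa F (i + 1) := by
  rw [aa_pow, aa, pow_succ']

lemma map_ww (hφ : ∀ x, φ x = x ^ Fintype.card F) (i : ℕ) :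
    PowerSeries.map φ (ww F i) = ww F (i + 1) := by
  refine PowerSeries.ext fun j => ?_
  simp only [ww, PowerSeries.coeff_map, PowerSeries.coeff_mk]
  rw [map_neg, map_pow, hφ, ← pow_mul, pow_mul, aa_pow_card]

lemma uu0_pow_mul_WW (hφ : ∀ x, φ x = x ^ Fintype.card F) (n k : ℕ) :
    uu F 0 ^ n * WW F n (k + 1) = twist F (WW F n k) := by
  have h1 : WW F n (k + 1)
      = (∏ i ∈ Finset.range (k + 1), ww F (i + 1) ^ n) * ww F 0 ^ n := by
    rw [WW, Finset.prod_range_succ']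
  have h2 : twist F (WW F n k) = ∏ i ∈ Finset.range (k + 1), ww F (i + 1) ^ n := by
    rw [twist_eq_map hφ, WW, map_prod]
    exact Finset.prod_congr rfl fun i _ => by rw [map_pow, map_ww hφ]
  rw [h1, h2, ← mul_assoc, mul_comm (uu F 0 ^ n), mul_assoc, ← mul_pow, uu_mul_ww,
    one_pow, mul_one]

lemma keyId (hφ : ∀ x, φ x = x ^ Fintype.card F) (n : ℕ) (e : TS F) (N : ℕ) :
    (tt F - th F) ^ n * EE F n e (N + 1) - twist F (EE F n e (N + 1))
      = e - twistIter F (N + 1) e * twist F (WW F n N) := by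
  have hd : tt F - th F = uu F 0 := by rw [uu, th, pow_zero, pow_one]
  induction N with
  | zero =>
    have hE1 : EE F n e 1 = e * WW F n 0 := by
      rw [EE, Finset.sum_range_one, twistIter_zero']
    have hW0 : uu F 0 ^ n * WW F n 0 = 1 := by
      rw [WW, Finset.prod_range_one, ← mul_pow, uu_mul_ww, one_pow]
    have h1 : (tt F - th F) ^ n * EE F n e 1 = e := by
      rw [hd, hE1, ← mul_assoc, mul_comm (uu F 0 ^ n) e, mul_assoc, hW0, mul_one]
    rw [h1, hE1, twist_mul hφ, twistIter_succ', twistIter_zero']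
  | succ N ih =>
    have hE : EE F n e (N + 1 + 1) = EE F n e (N + 1) + twistIter F (N + 1) e * WW F n (N + 1) := by
      rw [EE, EE, Finset.sum_range_succ]
    have h2 : (tt F - th F) ^ n * (twistIter F (N + 1) e * WW F n (N + 1))
        = twistIter F (N + 1) e * twist F (WW F n N) := by
      rw [hd, ← mul_assoc, mul_comm (uu F 0 ^ n), mul_assoc, uu0_pow_mul_WW hφ]
    have h3 : twist F (EE F n e (N + 1 + 1))
        = twist F (EE F n e (N + 1)) + twistIter F (N + 1 + 1) e * twist F (WW F n (N + 1)) := by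
      rw [hE, twist_add hφ, twist_mul hφ, ← twistIter_succ']
    rw [h3, hE, mul_add, h2]
    linear_combination ih

/-! #### Construction of the limit -/

lemma isPWO_pos : Set.IsPWO {j : ℤ | 0 < j} := by
  have h : Set.IsWF {j : ℤ | 0 < j} := BddBelow.wellFoundedOn_lt ⟨0, fun _ hx => le_of_lt hx⟩
  exact h.isPWO

/-- The sum `ξ_e` of the series, constructed coefficientwise via stabilization. -/
def xiLim (n : ℕ) (e : TS F) (he : DLeT (1 - n) e) : TS F :=
  PowerSeries.mk fun i =>
    { coeff := fun j => (coeffT F i (EE F n e (j.toNat + 1))).coeff j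
      isPWO_support' := by
        refine Set.IsPWO.mono isPWO_pos fun j hj => ?_
        simp only [Set.mem_setOf_eq]
        by_contra hle
        push_neg at hle
        exact hj (DLeT_EE he (j.toNat + 1) i j (by omega)) }

lemma xiLim_coeff {n : ℕ} {e : TS F} (he : DLeT (1 - n) e) (i : ℕ) (j : ℤ) (N : ℕ)
    (hj : j < (N : ℤ) + 1) :
    (coeffT F i (xiLim n e he)).coeff j = (coeffT F i (EE F n e N)).coeff j := by
  have hstage : ∀ M J : ℕ, j < (J : ℤ) + 1 → J ≤ M →
      (coeffT F i (EE F n e M)).coeff j = (coeffT F i (EE F n e J)).coeff j := by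
    intro M J hjJ hJM
    have h1 := DLeT_EE_sub he hJM i j hjJ
    rw [coeffT, map_sub, HahnSeries.coeff_sub] at h1
    rw [coeffT, coeffT]
    exact sub_eq_zero.mp h1
  have hA : j < ((j.toNat + 1 : ℕ) : ℤ) + 1 := by
    have := Int.self_le_toNat j
    push_cast
    omega
  have hL : (coeffT F i (xiLim n e he)).coeff j
      = (coeffT F i (EE F n e (j.toNat + 1))).coeff j := by
    rw [xiLim, coeffT, PowerSeries.coeff_mk]
  rw [hL, ← hstage (max (j.toNat + 1) N) (j.toNat + 1) hA (le_max_left _ _),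
    hstage (max (j.toNat + 1) N) N hj (le_max_right _ _)]

lemma DLeT_xiLim_sub {n : ℕ} {e : TS F} (he : DLeT (1 - n) e) (N : ℕ) :
    DLeT ((N : ℤ) + 1) (xiLim n e he - EE F n e N) := by
  intro i j hj
  rw [coeffT, map_sub, HahnSeries.coeff_sub]
  have h1 := xiLim_coeff he i j N hj
  rw [coeffT] at h1
  rw [h1]
  rw [coeffT]
  ring

lemma DLeT_xiLim {n : ℕ} {e : TS F} (he : DLeT (1 - n) e) :
    DLeT 1 (xiLim n e he) := by
  have h1 := DLeT_xiLim_sub he 0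
  have h2 : EE F n e 0 = 0 := by rw [EE, Finset.sum_range_zero]
  rw [h2, sub_zero] at h1
  simpa using h1

lemma DLeT_all_eq_zero {f : TS F} (h : ∀ m : ℤ, DLeT m f) : f = 0 := by
  refine PowerSeries.ext fun i => ?_
  rw [map_zero]
  refine HahnSeries.coeff_injective ?_
  funext j
  exact h (j + 1) i j (by omega)

/-- The functional equation for `ξ_e`. -/
lemma xiLim_eq (hφ : ∀ x, φ x = x ^ Fintype.card F) (n : ℕ) (e : TS F)
    (he : DLeT (1 - n) e) :
    (tt F - th F) ^ n * xiLim n e he - twist F (xiLim n e he) = e := by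
  rw [← sub_eq_zero]
  refine DLeT_all_eq_zero fun m => ?_
  set ξ := xiLim n e he with hξ
  -- choose N large
  obtain ⟨N, hN⟩ : ∃ N : ℕ, m ≤ (N : ℤ) + 1 - n := by
    refine ⟨(m + n).toNat, ?_⟩
    have := Int.self_le_toNat (m + n)
    omega
  have hsplit : (tt F - th F) ^ n * ξ - twist F ξ - e
      = (tt F - th F) ^ n * (ξ - EE F n e (N + 1))
        - (twist F ξ - twist F (EE F n e (N + 1)))
        - twistIter F (N + 1) e * twist F (WW F n N) := by
    have hk := keyId hφ n e N
    linear_combination hk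
  rw [hsplit]
  -- bound the three pieces
  have hδ : DLeT ((N : ℤ) + 1 + 1) (ξ - EE F n e (N + 1)) := DLeT_xiLim_sub he (N + 1)
  have hd : DLeT (-(n : ℤ)) ((tt F - th F) ^ n) := by
    have h1 : tt F - th F = uu F 0 := by rw [uu, th, pow_zero, pow_one]
    have h2 := DLeT_pow (DLeT_uu0 (F := F)) n
    rw [h1]
    exact DLeT_mono h2 (by omega)
  have hp1 : DLeT m ((tt F - th F) ^ n * (ξ - EE F n e (N + 1))) := by
    have := DLeT_mul hd hδ
    exact DLeT_mono this (by omega)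
  have hp2 : DLeT m (twist F ξ - twist F (EE F n e (N + 1))) := by
    rw [← twist_sub hφ]
    have h1 := DLeT_twist (DLeT_mono hδ (show ((N : ℤ) + 1) ≤ _ by omega) )
    refine DLeT_mono h1 ?_
    have hq1 : (1 : ℤ) ≤ (Fintype.card F : ℤ) := by
      have := Fintype.one_lt_card (α := F)
      omega
    nlinarith [hq1, hN, (show (0:ℤ) ≤ (N:ℤ) from Int.ofNat_nonneg N), (show (0:ℤ) ≤ (n:ℤ) from Int.ofNat_nonneg n)]
  have hp3 : DLeT m (twistIter F (N + 1) e * twist F (WW F n N)) := by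
    have h1 : twistIter F (N + 1) e * twist F (WW F n N)
        = twist F (twistIter F N e * WW F n N) := by
      rw [twist_mul hφ, twistIter_succ']
    rw [h1]
    have h2 := DLeT_twist (DLeT_term he N)
    refine DLeT_mono h2 ?_
    have hq1 : (1 : ℤ) ≤ (Fintype.card F : ℤ) := by
      have := Fintype.one_lt_card (α := F)
      omega
    nlinarith [hq1, hN, (show (0:ℤ) ≤ (N:ℤ) from Int.ofNat_nonneg N), (show (0:ℤ) ≤ (n:ℤ) from Int.ofNat_nonneg n)]
  exact DLeT_sub (DLeT_sub hp1 hp2) hp3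

/-! #### Norm conversions -/

lemma one_lt_cardE : (1 : ℝ≥0∞) < (Fintype.card F : ℝ≥0∞) := by
  exact_mod_cast Fintype.one_lt_card (α := F)

lemma card_ne_zeroE : (Fintype.card F : ℝ≥0∞) ≠ 0 :=
  (zero_lt_one.trans (one_lt_cardE (F := F))).ne'

lemma card_ne_topE : (Fintype.card F : ℝ≥0∞) ≠ ⊤ := by
  exact ENNReal.natCast_ne_top _

lemma ennreal_zpow_lt_s9 {a b : ℤ} (h : a < b) :
    (Fintype.card F : ℝ≥0∞) ^ a < (Fintype.card F : ℝ≥0∞) ^ b := by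
  set c : ℝ≥0∞ := (Fintype.card F : ℝ≥0∞)
  have hc1 : (1 : ℝ≥0∞) < c := one_lt_cardE
  have hc0 : c ≠ 0 := card_ne_zeroE
  have hct : c ≠ ⊤ := card_ne_topE
  have h1 : c ^ b = c ^ a * c ^ (b - a) := by
    rw [← ENNReal.zpow_add hc0 hct]
    congr 1
    ring
  have h2 : (1 : ℝ≥0∞) < c ^ (b - a) := by
    calc (1 : ℝ≥0∞) < c := hc1
    _ = c ^ (1 : ℤ) := (zpow_one c).symm
    _ ≤ c ^ (b - a) := ENNReal.zpow_le_of_le hc1.le (by omega)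
  calc c ^ a = c ^ a * 1 := (mul_one _).symm
  _ < c ^ a * c ^ (b - a) :=
      ENNReal.mul_lt_mul_right (ENNReal.zpow_pos hc0 hct a).ne' (ENNReal.zpow_lt_top hc0 hct a).ne h2
  _ = c ^ b := h1.symm

lemma DLe_of_Kabs_le {m : ℤ} {x : Kinf F}
    (h : Kabs (Fintype.card F) x ≤ (Fintype.card F : ℝ≥0∞) ^ (-m)) : DLe m x := by
  by_cases hx : x = 0
  · subst hx; exact DLe_zero m
  rw [Kabs, if_neg hx] at h
  have horder : m ≤ x.order := by
    by_contra hc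
    push_neg at hc
    exact absurd h (not_le.2 (ennreal_zpow_lt_s9 (by omega)))
  intro j hj
  exact HahnSeries.coeff_eq_zero_of_lt_order (lt_of_lt_of_le hj horder)

lemma Kabs_le_of_DLe {m : ℤ} {x : Kinf F} (h : DLe m x) :
    Kabs (Fintype.card F) x ≤ (Fintype.card F : ℝ≥0∞) ^ (-m) := by
  rw [Kabs]
  split_ifs with hx
  · exact zero_le
  have horder : m ≤ x.order := by
    by_contra hc
    push_neg at hc
    exact HahnSeries.coeff_order_eq_zero.not.2 hx (h _ hc)
  exact ENNReal.zpow_le_of_le (one_lt_cardE (F := F)).le (by omega)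

lemma gnorm_le_of_DLeT {m : ℤ} {f : TS F} (h : DLeT m f) :
    gnorm F f ≤ (Fintype.card F : ℝ≥0∞) ^ (-m) := by
  rw [gnorm]
  exact iSup_le fun i => Kabs_le_of_DLe (h i)

lemma DLeT_of_gnorm_lt {n : ℕ} {f : TS F}
    (h : gnorm F f < (Fintype.card F : ℝ≥0∞) ^ n) : DLeT (1 - n) f := by
  rw [gnorm] at h
  intro i
  refine DLe_of_Kabs_le ?_
  have h1 : Kabs (Fintype.card F) (coeffT F i f) < (Fintype.card F : ℝ≥0∞) ^ n :=
    lt_of_le_of_lt (le_iSup (fun i => Kabs (Fintype.card F) (coeffT F i f)) i) h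
  by_cases hx : coeffT F i f = 0
  · rw [Kabs, if_pos hx]; exact zero_le
  rw [Kabs, if_neg hx] at h1 ⊢
  refine ENNReal.zpow_le_of_le (one_lt_cardE (F := F)).le ?_
  have h2 : -(coeffT F i f).order < (n : ℤ) := by
    by_contra hc
    push_neg at hc
    refine absurd h1 (not_lt.2 ?_)
    calc (Fintype.card F : ℝ≥0∞) ^ (n : ℕ) = (Fintype.card F : ℝ≥0∞) ^ ((n : ℕ) : ℤ) :=
      (zpow_natCast _ _).symm
    _ ≤ (Fintype.card F : ℝ≥0∞) ^ (-(coeffT F i f).order) :=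
      ENNReal.zpow_le_of_le (one_lt_cardE (F := F)).le hc
  omega

/-! #### Tate elements -/

/-- Coefficientwise decay predicate equivalent to being a Tate element. -/
def TateD (f : TS F) : Prop := ∀ m : ℤ, ∀ᶠ i in atTop, DLe m (coeffT F i f)

lemma isTate_of_tateD {f : TS F} (h : TateD f) : IsTate F f := by
  rw [IsTate, ENNReal.tendsto_nhds_zero]
  intro ε hε
  obtain ⟨n0, hn0⟩ := ENNReal.exists_inv_two_pow_lt hε.ne'
  have hb : (Fintype.card F : ℝ≥0∞) ^ (-(n0 : ℤ)) ≤ ε := by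
    have h1 : (Fintype.card F : ℝ≥0∞) ^ (-(n0 : ℤ)) ≤ 2⁻¹ ^ n0 := by
      rw [ENNReal.zpow_neg, zpow_natCast, ENNReal.inv_pow]
      have hbase : ((Fintype.card F : ℝ≥0∞))⁻¹ ≤ 2⁻¹ := by
        refine ENNReal.inv_le_inv.2 ?_
        exact_mod_cast (show (2 : ℕ) ≤ Fintype.card F from Fintype.one_lt_card)
      exact pow_le_pow_left' hbase n0
    exact h1.trans hn0.le
  filter_upwards [h n0] with i hi
  exact (Kabs_le_of_DLe hi).trans hb

lemma tateD_of_isTate {f : TS F} (h : IsTate F f) : TateD f := by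
  intro m
  have h1 : (0 : ℝ≥0∞) < (Fintype.card F : ℝ≥0∞) ^ (-m) :=
    ENNReal.zpow_pos card_ne_zeroE card_ne_topE _
  rw [IsTate, ENNReal.tendsto_nhds_zero] at h
  filter_upwards [h _ h1] with i hi
  exact DLe_of_Kabs_le hi

lemma tateD_zero : TateD (0 : TS F) := fun m =>
  Filter.Eventually.of_forall fun i => by simpa [coeffT] using DLe_zero (F := F) m

lemma tateD_one : TateD (1 : TS F) := by
  intro m
  rw [Filter.eventually_atTop]
  refine ⟨1, fun i hi => ?_⟩
  rw [coeffT, PowerSeries.coeff_one, if_neg (by omega)]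
  exact DLe_zero m

lemma tateD_add {f g : TS F} (hf : TateD f) (hg : TateD g) : TateD (f + g) := by
  intro m
  filter_upwards [hf m, hg m] with i h1 h2
  simpa [coeffT, map_add] using DLe_add h1 h2

lemma tateD_finsum {ι : Type*} {s : Finset ι} {h : ι → TS F}
    (H : ∀ x ∈ s, TateD (h x)) : TateD (∑ x ∈ s, h x) := by
  classical
  induction s using Finset.induction_on with
  | empty => simpa using tateD_zero
  | insert _ _ hx ih =>
    rw [Finset.sum_insert hx]
    exact tateD_add (H _ (Finset.mem_insert_self _ _))
      (ih fun x hxs => H x (Finset.mem_insert_of_mem hxs))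

lemma tateD_mul {a b : ℤ} {f g : TS F} (ha : DLeT a f) (hb : DLeT b g)
    (hf : TateD f) (hg : TateD g) : TateD (f * g) := by
  intro m
  rw [Filter.eventually_atTop]
  obtain ⟨If, hIf⟩ := Filter.eventually_atTop.1 (hf (m - b))
  obtain ⟨Ig, hIg⟩ := Filter.eventually_atTop.1 (hg (m - a))
  refine ⟨If + Ig, fun i hi => ?_⟩
  rw [coeffT, PowerSeries.coeff_mul]
  refine DLe_finsum fun p hp => ?_
  rw [Finset.HasAntidiagonal.mem_antidiagonal] at hp
  by_cases h1 : If ≤ p.1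
  · have := DLe_mul (hIf p.1 h1) (hb p.2)
    exact DLe_mono this (by omega)
  · have h2 : Ig ≤ p.2 := by omega
    have := DLe_mul (ha p.1) (hIg p.2 h2)
    exact DLe_mono this (by omega)

lemma tateD_twist {f : TS F} (hf : TateD f) : TateD (twist F f) := by
  intro m
  filter_upwards [hf (max m 0)] with i hi
  rw [coeffT_twist]
  have h1 := DLe_pow hi (Fintype.card F)
  refine DLe_mono h1 ?_
  have hq1 : (1 : ℤ) ≤ (Fintype.card F : ℤ) := by
    have := Fintype.one_lt_card (α := F); omega
  rcases le_total m 0 with hm | hm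
  · exact le_trans hm (by positivity)
  · have : max m 0 = m := max_eq_left hm
    rw [this]
    nlinarith

lemma tateD_twistIter {f : TS F} (hf : TateD f) (k : ℕ) : TateD (twistIter F k f) := by
  induction k with
  | zero => simpa [twistIter_zero'] using hf
  | succ k ih => rw [twistIter_succ']; exact tateD_twist ih

lemma tateD_ww (i : ℕ) : TateD (ww F i) := by
  intro m
  rw [Filter.eventually_atTop]
  refine ⟨m.toNat, fun j hj => ?_⟩
  rw [ww, coeffT, PowerSeries.coeff_mk, aa_pow]
  refine DLe_neg (DLe_single _ ?_)
  have h1 : 1 ≤ Fintype.card F ^ i := Nat.one_le_pow _ _ Fintype.card_pos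
  have h2 : j + 1 ≤ (j + 1) * Fintype.card F ^ i := Nat.le_mul_of_pos_right _ (by omega)
  have h3 := Int.self_le_toNat m
  have h4 : (m.toNat : ℤ) ≤ (j : ℤ) := by exact_mod_cast hj
  have h5 : ((j + 1 : ℕ) : ℤ) ≤ (((j + 1) * Fintype.card F ^ i : ℕ) : ℤ) := by exact_mod_cast h2
  push_cast at h5 ⊢
  omega

lemma tateD_WW (n k : ℕ) : TateD (WW F n k) := by
  have hpow : ∀ i : ℕ, TateD (ww F i ^ n) ∧ DLeT ((n : ℤ) * (Fintype.card F ^ i : ℕ)) (ww F i ^ n) :=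
    fun i => ⟨by
      induction n with
      | zero => simpa using tateD_one
      | succ n ihn =>
        rw [pow_succ]
        exact tateD_mul (DLeT_pow (DLeT_ww i) n) (DLeT_ww i) ihn (tateD_ww i),
      DLeT_pow (DLeT_ww i) n⟩
  rw [WW]
  induction (k + 1) with
  | zero => simpa using tateD_one
  | succ k ihk =>
    rw [Finset.prod_range_succ]
    refine tateD_mul (DLeT_prod fun i _ => (DLeT_pow (DLeT_ww i) n)) ((hpow k).2) ihk (hpow k).1

lemma tateD_EE {n : ℕ} {e : TS F} (he : TateD e) (hb : DLeT (1 - n) e) (N : ℕ) :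
    TateD (EE F n e N) := by
  rw [EE]
  refine tateD_finsum fun k _ => ?_
  exact tateD_mul (DLeT_twistIter hb k) (DLeT_WW n k) (tateD_twistIter he k) (tateD_WW n k)

end Aux

/-- Let `n ≥ 1` and `e ∈ K∞⟨t⟩` with `‖e‖ < qⁿ`.  Then the series
`ξ_e = ∑_{k≥0} e⁽ᵏ⁾ ∏_{i=0}^{k} (t−θ^{qⁱ})^{−n}` converges in `K∞⟨t⟩`, its sum satisfies
`‖ξ_e‖ < 1`, and it solves the difference equation `(t−θ)ⁿ ξ_e − ξ_e⁽¹⁾ = e`. -/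
theorem statement9 (q n : ℕ) (hq : q = Fintype.card F) (hn : 1 ≤ n)
    (e : TS F) (he : IsTate F e) (hnorm : gnorm F e < (q : ℝ≥0∞) ^ n) :
    ∃ ξ : TS F, IsTate F ξ ∧ TT F (xiPartial F n e) ξ ∧ gnorm F ξ < 1 ∧
      (tt F - th F) ^ n * ξ - twist F ξ = e := by
  subst hq
  obtain ⟨φ, hφ⟩ := exists_frob (F := F)
  have heb : DLeT (1 - n) e := DLeT_of_gnorm_lt hnorm
  refine ⟨xiLim n e heb, ?_, ?_, ?_, xiLim_eq hφ n e heb⟩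
  · -- `ξ` is a Tate element
    refine isTate_of_tateD ?_
    intro m
    set N : ℕ := m.toNat + 1 with hN
    have h1 : DLeT m (xiLim n e heb - EE F n e N) := by
      refine DLeT_mono (DLeT_xiLim_sub heb N) ?_
      have h2 := Int.self_le_toNat m
      have h3 : (N : ℤ) = (m.toNat : ℤ) + 1 := by rw [hN]; push_cast; ring
      omega
    filter_upwards [tateD_EE (tateD_of_isTate he) heb N m] with i hi
    have h2 : coeffT F i (xiLim n e heb)
        = coeffT F i (xiLim n e heb - EE F n e N) + coeffT F i (EE F n e N) := by
      rw [coeffT, coeffT, coeffT, ← map_add, sub_add_cancel]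
    rw [h2]
    exact DLe_add (h1 i) hi
  · -- convergence of the partial sums to `ξ`
    rw [TT]
    have hbound : ∀ N : ℕ, gnorm F (xiLim n e heb - xiPartial F n e N)
        ≤ (Fintype.card F : ℝ≥0∞) ^ (-((N : ℤ) + 1)) := by
      intro N
      rw [xiPartial_eq_EE]
      exact gnorm_le_of_DLeT (DLeT_xiLim_sub heb N)
    have hr : ((Fintype.card F : ℝ≥0∞))⁻¹ < 1 := ENNReal.inv_lt_one.2 one_lt_cardE
    have h0 : Tendsto (fun k : ℕ => ((Fintype.card F : ℝ≥0∞))⁻¹ ^ k) atTop (nhds 0) :=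
      ENNReal.tendsto_pow_atTop_nhds_zero_of_lt_one hr
    have h1 : Tendsto (fun N : ℕ => ((Fintype.card F : ℝ≥0∞))⁻¹ ^ (N + 1)) atTop (nhds 0) :=
      h0.comp (tendsto_add_atTop_nat 1)
    have h2 : Tendsto (fun N : ℕ => (Fintype.card F : ℝ≥0∞) ^ (-((N : ℤ) + 1))) atTop
        (nhds 0) := by
      refine h1.congr fun N => ?_
      rw [← ENNReal.inv_pow, ← zpow_natCast, ← ENNReal.zpow_neg]
      congr 1
    exact tendsto_of_tendsto_of_tendsto_of_le_of_le tendsto_const_nhds h2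
      (fun N => zero_le) hbound
  · -- `‖ξ‖ < 1`
    have h1 := gnorm_le_of_DLeT (DLeT_xiLim heb)
    refine lt_of_le_of_lt h1 ?_
    rw [show ((-1 : ℤ)) = -(1 : ℤ) from rfl, ENNReal.zpow_neg,
      zpow_one]
    exact ENNReal.inv_lt_one.2 one_lt_cardE

end Carlitz
end
end
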